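/- arXiv:1907.10269 — 7 statements merged into one kernel-verified Lean document; each statement's English description precedes it below -/
import Mathlib

section
/- Let p, q be continuous real-valued functions on [t₀,∞) with p(t) > 0, and let α₊ be a positive continuously differentiable solution on [t₀,∞) of the Riccati equation α'(t) + α(t)²/p(t) + q(t)α(t)/p(t) + r(t) = 0 with r(t) ≥ 0 for all t ≥ t₀. Then α₊(t) ≤ α̃₊(t) for all t ≥ t₀, where α̃₊(t) = α₊(t₀)·exp(-∫_{t₀}^t q(s)/p(s) ds) / (1 + α₊(t₀)·∫_{t₀}^t exp(-∫_{t₀}^τ q(s)/p(s) ds)/p(τ) dτ). -/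
open MeasureTheory Set Filter

theorem riccati_sub_comparison
    (t₀ : ℝ) (p q r α : ℝ → ℝ)
    (hp : ContinuousOn p (Set.Ici t₀)) (hq : ContinuousOn q (Set.Ici t₀))
    (hr : ContinuousOn r (Set.Ici t₀))
    (hppos : ∀ t ∈ Set.Ici t₀, 0 < p t)
    (hrpos : ∀ t ∈ Set.Ici t₀, 0 ≤ r t)
    (hαpos : ∀ t ∈ Set.Ici t₀, 0 < α t)
    (hα : ∀ t ∈ Set.Ici t₀,
      HasDerivAt α (-(α t ^ 2 / p t + q t * α t / p t + r t)) t) :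
    ∀ t ∈ Set.Ici t₀,
      α t ≤ α t₀ * Real.exp (-∫ s in t₀..t, q s / p s) /
        (1 + α t₀ * ∫ τ in t₀..t,
          Real.exp (-∫ s in t₀..τ, q s / p s) / p τ) := by
  set P : ℝ → ℝ := fun t => p (max t t₀) with hPdef
  set Q : ℝ → ℝ := fun t => q (max t t₀) with hQdef
  have hmax : ∀ t : ℝ, max t t₀ ∈ Set.Ici t₀ := fun t => Set.mem_Ici.2 (le_max_right _ _)
  have hmaxc : Continuous fun t : ℝ => max t t₀ := continuous_id.max continuous_const
  have hPc : Continuous P := hp.comp_continuous hmaxc hmax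
  have hQc : Continuous Q := hq.comp_continuous hmaxc hmax
  have hPpos : ∀ t, 0 < P t := fun t => hppos _ (hmax t)
  have hQPc : Continuous (fun s => Q s / P s) := hQc.div hPc fun t => (hPpos t).ne'
  set E : ℝ → ℝ := fun t => Real.exp (-∫ s in t₀..t, Q s / P s) with hEdef
  have hE : ∀ t, HasDerivAt E (-(Q t / P t) * E t) t := by
    intro t
    have h1 : HasDerivAt (fun u => -∫ s in t₀..u, Q s / P s) (-(Q t / P t)) t :=
      ((hQPc.integral_hasStrictDerivAt t₀ t).hasDerivAt).neg
    simpa [hEdef, mul_comm] using h1.exp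
  have hEpos : ∀ t, 0 < E t := fun t => Real.exp_pos _
  have hEPc : Continuous fun τ => E τ / P τ :=
    (continuous_iff_continuousAt.2 fun t => (hE t).differentiableAt.continuousAt).div hPc
      fun t => (hPpos t).ne'
  set G : ℝ → ℝ := fun t => (α t₀)⁻¹ + ∫ τ in t₀..t, E τ / P τ with hGdef
  have hG : ∀ t, HasDerivAt G (E t / P t) t := fun t =>
    ((hEPc.integral_hasStrictDerivAt t₀ t).hasDerivAt).const_add _
  have hα0 : 0 < α t₀ := hαpos t₀ Set.self_mem_Ici
  have hGpos : ∀ t ∈ Set.Ici t₀, 0 < G t := by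
    intro t ht
    have h1 : 0 ≤ ∫ τ in t₀..t, E τ / P τ :=
      intervalIntegral.integral_nonneg ht fun τ _ => le_of_lt (div_pos (hEpos τ) (hPpos τ))
    have := inv_pos.2 hα0
    simp only [hGdef]
    linarith
  -- u and its derivative on Ici t₀
  set u : ℝ → ℝ := fun t => E t / α t - G t with hudef
  have hu' : ∀ t ∈ Set.Ici t₀, HasDerivAt u (E t * r t / α t ^ 2) t := by
    intro t ht
    have hmt : max t t₀ = t := max_eq_left ht
    have hPt : P t = p t := by simp [hPdef, hmt]
    have hQt : Q t = q t := by simp [hQdef, hmt]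
    have hαt : α t ≠ 0 := (hαpos t ht).ne'
    have hpt : p t ≠ 0 := (hppos t ht).ne'
    have h1 : HasDerivAt u
        ((-(Q t / P t) * E t * α t - E t * -(α t ^ 2 / p t + q t * α t / p t + r t)) / α t ^ 2
          - E t / P t) t := ((hE t).div (hα t ht) hαt).sub (hG t)
    convert h1 using 1
    rw [hPt, hQt]
    field_simp
    ring
  have hucont : ContinuousOn u (Set.Ici t₀) := fun t ht =>
    ((hu' t ht).differentiableAt.continuousAt).continuousWithinAt
  have hmono : MonotoneOn u (Set.Ici t₀) := by
    apply monotoneOn_of_deriv_nonneg (convex_Ici t₀) hucont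
    · rw [interior_Ici]
      exact fun t ht => ((hu' t (Set.mem_Ici.2 (le_of_lt ht))).differentiableAt).differentiableWithinAt
    · rw [interior_Ici]
      intro t ht
      rw [(hu' t (Set.mem_Ici.2 (le_of_lt ht))).deriv]
      have := hrpos t (Set.mem_Ici.2 (le_of_lt ht))
      positivity
  have hut0 : u t₀ = 0 := by
    have hE0 : E t₀ = 1 := by rw [hEdef]; simp
    have hG0 : G t₀ = (α t₀)⁻¹ := by rw [hGdef]; simp
    show E t₀ / α t₀ - G t₀ = 0
    rw [hE0, hG0, one_div, sub_self]
  -- main inequality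
  intro t ht
  have hu0 : 0 ≤ u t := hut0 ▸ hmono (Set.mem_Ici.2 le_rfl) ht ht
  have hkey : α t ≤ E t / G t := by
    have h1 : G t ≤ E t / α t := by simpa [hudef, sub_nonneg] using hu0
    rw [le_div_iff₀ (hGpos t ht)]
    calc α t * G t ≤ α t * (E t / α t) :=
          mul_le_mul_of_nonneg_left h1 (le_of_lt (hαpos t ht))
      _ = E t := by
          rw [mul_comm]; exact div_mul_cancel₀ _ (hαpos t ht).ne'
  -- rewrite the goal integrals
  have hIeq : ∀ τ ∈ Set.Ici t₀, (∫ s in t₀..τ, q s / p s) = ∫ s in t₀..τ, Q s / P s := by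
    intro τ hτ
    apply intervalIntegral.integral_congr
    intro s hs
    rw [Set.uIcc_of_le hτ] at hs
    have : max s t₀ = s := max_eq_left hs.1
    simp [hPdef, hQdef, this]
  have hOeq : (∫ τ in t₀..t, Real.exp (-∫ s in t₀..τ, q s / p s) / p τ)
      = ∫ τ in t₀..t, E τ / P τ := by
    apply intervalIntegral.integral_congr
    intro τ hτ
    rw [Set.uIcc_of_le ht] at hτ
    have hm : max τ t₀ = τ := max_eq_left hτ.1
    show Real.exp (-∫ s in t₀..τ, q s / p s) / p τ = E τ / P τ
    rw [hIeq τ (Set.mem_Ici.2 hτ.1)]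
    simp only [hEdef, hPdef, hm]
  rw [hIeq t ht, hOeq]
  have hden : 1 + α t₀ * ∫ τ in t₀..t, E τ / P τ = α t₀ * G t := by
    simp only [hGdef]
    field_simp
  rw [hden]
  calc α t ≤ E t / G t := hkey
    _ = α t₀ * E t / (α t₀ * G t) := by
        rw [mul_div_mul_left _ _ hα0.ne']
end

section
/- Let p, q be continuous on [t₀,∞) with p > 0, let α₀ > 0, and suppose I(t₀) := ∫_{t₀}^∞ exp(-∫_{t₀}^τ q(s)/p(s) ds)/p(τ) dτ < ∞. With α̃(t) the explicit positive solution of α' + α²/p + qα/p = 0 with α̃(t₀) = α₀, one has for every t ≥ t₀: ∫_t^∞ exp(-∫_t^τ (2α̃(s)+q(s))/p(s) ds)/p(τ) dτ = 1 / (α̃(t) + 1/I(t)), where I(t) = ∫_t^∞ exp(-∫_t^τ q(s)/p(s) ds)/p(τ) dτ. -/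
open MeasureTheory Set Filter Topology

theorem tail_integral_identity
    (t₀ : ℝ) (p q : ℝ → ℝ) (α₀ : ℝ)
    (hp : ContinuousOn p (Set.Ici t₀)) (hq : ContinuousOn q (Set.Ici t₀))
    (hppos : ∀ t ∈ Set.Ici t₀, 0 < p t) (hα₀ : 0 < α₀)
    (hI : MeasureTheory.IntegrableOn
      (fun τ => Real.exp (-∫ s in t₀..τ, q s / p s) / p τ) (Set.Ici t₀)) :
    let αt : ℝ → ℝ := fun t =>
      α₀ * Real.exp (-∫ ζ in t₀..t, q ζ / p ζ) /
        (1 + α₀ * ∫ ξ in t₀..t, Real.exp (-∫ ζ in t₀..ξ, q ζ / p ζ) / p ξ)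
    let I : ℝ → ℝ := fun t =>
      ∫ τ in Set.Ici t, Real.exp (-∫ s in t..τ, q s / p s) / p τ
    ∀ t ∈ Set.Ici t₀,
      (∫ τ in Set.Ici t,
          Real.exp (-∫ s in t..τ, (2 * αt s + q s) / p s) / p τ) =
        1 / (αt t + 1 / I t) := by
  intro αt I t ht
  -- Extend p, q to all of ℝ by projecting onto `Ici t₀`.
  set c : ℝ → ℝ := fun x => max x t₀ with hc
  have hc_cont : Continuous c := continuous_id.max continuous_const
  have hc_maps : ∀ x, c x ∈ Set.Ici t₀ := fun x => Set.mem_Ici.2 (le_max_right _ _)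
  have hc_eq : ∀ x ∈ Set.Ici t₀, c x = x := fun x hx => max_eq_left hx
  set P : ℝ → ℝ := fun x => p (c x) with hPdef
  set Q : ℝ → ℝ := fun x => q (c x) with hQdef
  have hPc : Continuous P := hp.comp_continuous hc_cont hc_maps
  have hQc : Continuous Q := hq.comp_continuous hc_cont hc_maps
  have hPpos : ∀ x, 0 < P x := fun x => hppos _ (hc_maps x)
  have hPeq : ∀ x ∈ Set.Ici t₀, P x = p x := fun x hx => by simp [hPdef, hc_eq x hx]
  have hQeq : ∀ x ∈ Set.Ici t₀, Q x = q x := fun x hx => by simp [hQdef, hc_eq x hx]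
  set g : ℝ → ℝ := fun x => Q x / P x with hgdef
  have hgc : Continuous g := hQc.div hPc fun x => (hPpos x).ne'
  set G : ℝ → ℝ := fun x => ∫ s in t₀..x, g s with hGdef
  set E : ℝ → ℝ := fun x => Real.exp (-G x) with hEdef
  set e : ℝ → ℝ := fun x => E x / P x with hedef
  set F : ℝ → ℝ := fun x => ∫ s in t₀..x, e s with hFdef
  -- derivative of G, continuity of G, E
  have hGder : ∀ x, HasDerivAt G (g x) x := fun x =>
    intervalIntegral.integral_hasDerivAt_right (hgc.intervalIntegrable _ _)
      (hgc.stronglyMeasurableAtFilter _ _) hgc.continuousAt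
  have hGc : Continuous G := by
    exact continuous_iff_continuousAt.2 fun x => (hGder x).continuousAt
  have hEc : Continuous E := (hGc.neg).rexp
  have hec : Continuous e := hEc.div hPc fun x => (hPpos x).ne'
  have hepos : ∀ x, 0 < e x := fun x => div_pos (Real.exp_pos _) (hPpos x)
  have hFder : ∀ x, HasDerivAt F (e x) x := fun x =>
    intervalIntegral.integral_hasDerivAt_right (hec.intervalIntegrable _ _)
      (hec.stronglyMeasurableAtFilter _ _) hec.continuousAt
  have hFc : Continuous F := continuous_iff_continuousAt.2 fun x => (hFder x).continuousAt
  -- congruence of the inner integral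
  have hInner : ∀ x ∈ Set.Ici t₀, (∫ s in t₀..x, q s / p s) = G x := by
    intro x hx
    refine intervalIntegral.integral_congr fun s hs => ?_
    have hs' : s ∈ Set.Ici t₀ := by
      rcases hs with ⟨h1, h2⟩
      exact Set.mem_Ici.2 (le_trans (by simp [min_eq_left (Set.mem_Ici.1 hx)]) h1)
    show q s / p s = Q s / P s
    rw [hPeq s hs', hQeq s hs']
  -- e is the integrand of hI on Ici t₀
  have he_int : IntegrableOn e (Set.Ici t₀) := by
    refine hI.congr_fun (fun τ hτ => ?_) measurableSet_Ici
    show Real.exp (-∫ s in t₀..τ, q s / p s) / p τ = e τ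
    rw [hInner τ hτ, ← hPeq τ hτ]
  have he_int_t : IntegrableOn e (Set.Ioi t) :=
    he_int.mono_set (fun x hx => Set.mem_Ici.2 (le_trans ht (le_of_lt hx)))
  have hFnonneg : ∀ x ∈ Set.Ici t₀, 0 ≤ F x := fun x hx =>
    intervalIntegral.integral_nonneg (Set.mem_Ici.1 hx) (fun s _ => (hepos s).le)
  set D : ℝ → ℝ := fun x => 1 + α₀ * F x with hDdef
  have hDpos : ∀ x ∈ Set.Ici t₀, 0 < D x := by
    intro x hx
    have h0 : 0 ≤ α₀ * F x := mul_nonneg hα₀.le (hFnonneg x hx)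
    show 0 < 1 + α₀ * F x
    linarith
  have hDone : ∀ x ∈ Set.Ici t₀, 1 ≤ D x := by
    intro x hx
    have h0 : 0 ≤ α₀ * F x := mul_nonneg hα₀.le (hFnonneg x hx)
    show 1 ≤ 1 + α₀ * F x
    linarith
  have hDder : ∀ x, HasDerivAt D (α₀ * e x) x := fun x =>
    ((hFder x).const_mul α₀).const_add 1
  have hDc : Continuous D := continuous_const.add (continuous_const.mul hFc)
  set A : ℝ → ℝ := fun x => α₀ * E x / D x with hAdef
  have hαt_eq : ∀ x ∈ Set.Ici t₀, αt x = A x := by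
    intro x hx
    show α₀ * Real.exp (-∫ ζ in t₀..x, q ζ / p ζ) /
        (1 + α₀ * ∫ ξ in t₀..x, Real.exp (-∫ ζ in t₀..ξ, q ζ / p ζ) / p ξ) = A x
    have h1 : (∫ ξ in t₀..x, Real.exp (-∫ ζ in t₀..ξ, q ζ / p ζ) / p ξ) = F x := by
      refine intervalIntegral.integral_congr fun ξ hξ => ?_
      have hξ' : ξ ∈ Set.Ici t₀ := Set.mem_Ici.2 (le_trans (by simp [min_eq_left (Set.mem_Ici.1 hx)]) hξ.1)
      show Real.exp (-∫ ζ in t₀..ξ, q ζ / p ζ) / p ξ = e ξ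
      rw [hInner ξ hξ', ← hPeq ξ hξ']
    rw [h1, hInner x hx]
  have hAcont : ContinuousOn A (Set.Ici t₀) :=
    ((continuous_const.mul hEc).continuousOn).div hDc.continuousOn
      (fun x hx => (hDpos x hx).ne')
  set L : ℝ → ℝ := fun x => Real.log (D x) with hLdef
  have hLder : ∀ x ∈ Set.Ici t₀, HasDerivAt L (A x / P x) x := by
    intro x hx
    have h := (Real.hasDerivAt_log (hDpos x hx).ne').comp x (hDder x)
    have h2 : (D x)⁻¹ * (α₀ * e x) = A x / P x := by
      show (D x)⁻¹ * (α₀ * (E x / P x)) = α₀ * E x / D x / P x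
      field_simp
    rw [← h2]
    exact h
  have hexpL : ∀ x ∈ Set.Ici t₀, Real.exp (L x) = D x := fun x hx =>
    Real.exp_log (hDpos x hx)
  -- FTC on [t, τ] for L
  have hsubIci : ∀ τ, t ≤ τ → Set.uIcc t τ ⊆ Set.Ici t₀ := by
    intro τ hτ
    rw [Set.uIcc_of_le hτ]
    exact fun s hs => Set.mem_Ici.2 (le_trans ht hs.1)
  have hL_int : ∀ τ, t ≤ τ → (∫ s in t..τ, A s / P s) = L τ - L t := by
    intro τ hτ
    have hAP : ContinuousOn (fun s => A s / P s) (Set.uIcc t τ) := fun s hs =>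
      ((hAcont s (hsubIci τ hτ hs)).mono (hsubIci τ hτ)).div
        (hPc.continuousOn s hs) (hPpos s).ne'
    exact intervalIntegral.integral_eq_sub_of_hasDerivAt
      (fun s hs => hLder s (hsubIci τ hτ hs)) hAP.intervalIntegrable
  have hG_int : ∀ τ, t ≤ τ → (∫ s in t..τ, g s) = G τ - G t := by
    intro τ hτ
    refine intervalIntegral.integral_eq_sub_of_hasDerivAt
      (fun s _ => hGder s) (hgc.intervalIntegrable _ _)
  -- Step A: pointwise identity of the LHS integrand
  have keyA : ∀ τ ∈ Set.Ici t,
      Real.exp (-∫ s in t..τ, (2 * αt s + q s) / p s) / p τ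
        = (D t * D t * Real.exp (G t)) * (e τ / (D τ * D τ)) := by
    intro τ hτ
    have hτ' : τ ∈ Set.Ici t₀ := Set.mem_Ici.2 (le_trans ht hτ)
    have hcongr : (∫ s in t..τ, (2 * αt s + q s) / p s)
        = ∫ s in t..τ, (2 * (A s / P s) + g s) := by
      refine intervalIntegral.integral_congr fun s hs => ?_
      have hs' : s ∈ Set.Ici t₀ := hsubIci τ hτ hs
      rw [hαt_eq s hs', ← hPeq s hs', ← hQeq s hs']
      show (2 * A s + Q s) / P s = 2 * (A s / P s) + Q s / P s
      ring
    have hsplit : (∫ s in t..τ, (2 * (A s / P s) + g s))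
        = 2 * (L τ - L t) + (G τ - G t) := by
      have hAP : ContinuousOn (fun s => A s / P s) (Set.uIcc t τ) := fun s hs =>
        ((hAcont s (hsubIci τ hτ hs)).mono (hsubIci τ hτ)).div
          (hPc.continuousOn s hs) (hPpos s).ne'
      have hii2 : IntervalIntegrable (fun s => 2 * (A s / P s)) volume t τ :=
        hAP.intervalIntegrable.const_mul 2
      rw [intervalIntegral.integral_add hii2 (hgc.intervalIntegrable _ _),
        intervalIntegral.integral_const_mul, hL_int τ hτ, hG_int τ hτ]
    rw [hcongr, hsplit, ← hPeq τ hτ']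
    have hET : Real.exp (-(2 * (L τ - L t) + (G τ - G t)))
        = (D t * D t) * Real.exp (G t) * (E τ / (D τ * D τ)) := by
      rw [← hexpL t ht, ← hexpL τ hτ']
      show Real.exp (-(2 * (L τ - L t) + (G τ - G t)))
        = Real.exp (L t) * Real.exp (L t) * Real.exp (G t)
          * (Real.exp (-G τ) / (Real.exp (L τ) * Real.exp (L τ)))
      simp only [div_eq_mul_inv, ← Real.exp_neg, ← Real.exp_add]
      congr 1
      ring
    rw [hET]
    show D t * D t * Real.exp (G t) * (E τ / (D τ * D τ)) / P τ
      = D t * D t * Real.exp (G t) * (E τ / P τ / (D τ * D τ))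
    ring
  -- limit of F at infinity
  set Finf : ℝ := ∫ s in Set.Ioi t₀, e s with hFinfdef
  have hFtend : Tendsto F atTop (𝓝 Finf) :=
    intervalIntegral_tendsto_integral_Ioi t₀ (he_int.mono_set Set.Ioi_subset_Ici_self)
      tendsto_id
  have hFinf_nonneg : 0 ≤ Finf :=
    setIntegral_nonneg measurableSet_Ioi fun x _ => (hepos x).le
  set b : ℝ := 1 + α₀ * Finf with hbdef
  have hbpos : 0 < b := by
    have h0 : 0 ≤ α₀ * Finf := mul_nonneg hα₀.le hFinf_nonneg
    show 0 < 1 + α₀ * Finf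
    linarith
  set Δ : ℝ := ∫ s in Set.Ioi t, e s with hΔdef
  have hΔeq : Δ = Finf - F t := by
    have h1 : Tendsto (fun x => ∫ s in t..x, e s) atTop (𝓝 Δ) :=
      intervalIntegral_tendsto_integral_Ioi t he_int_t tendsto_id
    have h2 : Tendsto (fun x => ∫ s in t..x, e s) atTop (𝓝 (Finf - F t)) := by
      have h3 : (fun x => ∫ s in t..x, e s) = fun x => F x - F t := by
        funext x
        exact (intervalIntegral.integral_interval_sub_left
          (hec.intervalIntegrable _ _) (hec.intervalIntegrable _ _)).symm
      rw [h3]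
      exact hFtend.sub_const _
    exact tendsto_nhds_unique h1 h2
  have hΔpos : 0 < Δ := by
    rw [hΔdef]
    refine (setIntegral_pos_iff_support_of_nonneg_ae
      (Filter.Eventually.of_forall fun x => (hepos x).le) he_int_t).2 ?_
    have hsupp : Function.support e ∩ Set.Ioi t = Set.Ioi t :=
      Set.inter_eq_self_of_subset_right fun x _ => (hepos x).ne'
    rw [hsupp, Real.volume_Ioi]
    exact ENNReal.zero_lt_top
  -- FTC on (t, ∞)
  set J : ℝ → ℝ := fun x => -(α₀⁻¹ * (D x)⁻¹) with hJdef
  have hJder : ∀ x ∈ Set.Ici t, HasDerivAt J (e x / (D x * D x)) x := by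
    intro x hx
    have hx' : x ∈ Set.Ici t₀ := Set.mem_Ici.2 (le_trans ht hx)
    have h1 : HasDerivAt (fun y => (D y)⁻¹) (-(α₀ * e x) / (D x) ^ 2) x :=
      (hDder x).inv (hDpos x hx').ne'
    have h2 := (h1.const_mul α₀⁻¹).neg
    have h3 : -(α₀⁻¹ * (-(α₀ * e x) / D x ^ 2)) = e x / (D x * D x) := by
      have := (hDpos x hx').ne'
      field_simp
    rw [← h3]
    exact h2
  have hf'int : IntegrableOn (fun x => e x / (D x * D x)) (Set.Ioi t) := by
    refine Integrable.mono he_int_t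
      ((hec.measurable.div ((hDc.mul hDc).measurable)).aestronglyMeasurable) ?_
    refine (ae_restrict_iff' measurableSet_Ioi).2
      (Filter.Eventually.of_forall fun x hx => ?_)
    have hx' : x ∈ Set.Ici t₀ := Set.mem_Ici.2 (le_trans ht hx.le)
    have hD1 : 1 ≤ D x * D x := by nlinarith [hDone x hx']
    have hDD : (0:ℝ) < D x * D x := by nlinarith [hDone x hx']
    rw [Real.norm_eq_abs, Real.norm_eq_abs, abs_div, abs_of_pos hDD]
    exact div_le_self (abs_nonneg _) hD1
  have hJtend : Tendsto J atTop (𝓝 (-(α₀⁻¹ * b⁻¹))) := by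
    have hDt : Tendsto D atTop (𝓝 b) := by
      have := (hFtend.const_mul α₀).const_add 1
      exact this
    exact ((hDt.inv₀ hbpos.ne').const_mul α₀⁻¹).neg
  have hB : (∫ x in Set.Ioi t, e x / (D x * D x)) = α₀⁻¹ * (D t)⁻¹ - α₀⁻¹ * b⁻¹ := by
    rw [integral_Ioi_of_hasDerivAt_of_tendsto' hJder hf'int hJtend]
    show -(α₀⁻¹ * b⁻¹) - -(α₀⁻¹ * (D t)⁻¹) = _
    ring
  -- LHS
  have hLHS : (∫ τ in Set.Ici t, Real.exp (-∫ s in t..τ, (2 * αt s + q s) / p s) / p τ)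
      = (D t * D t * Real.exp (G t)) * (α₀⁻¹ * (D t)⁻¹ - α₀⁻¹ * b⁻¹) := by
    rw [MeasureTheory.integral_Ici_eq_integral_Ioi,
      setIntegral_congr_fun measurableSet_Ioi (fun τ hτ => keyA τ (Set.mem_Ici.2 (le_of_lt hτ))),
      MeasureTheory.integral_const_mul, hB]
  -- I t
  have hIt : I t = Real.exp (G t) * Δ := by
    show (∫ τ in Set.Ici t, Real.exp (-∫ s in t..τ, q s / p s) / p τ) = _
    have hcong : ∀ τ ∈ Set.Ioi t,
        Real.exp (-∫ s in t..τ, q s / p s) / p τ = Real.exp (G t) * e τ := by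
      intro τ hτ
      have hτ' : τ ∈ Set.Ici t₀ := Set.mem_Ici.2 (le_trans ht hτ.le)
      have h1 : (∫ s in t..τ, q s / p s) = G τ - G t := by
        rw [← hG_int τ hτ.le]
        refine intervalIntegral.integral_congr fun s hs => ?_
        have hs' := hsubIci τ hτ.le hs
        show q s / p s = Q s / P s
        rw [hPeq s hs', hQeq s hs']
      rw [h1, ← hPeq τ hτ', neg_sub]
      show Real.exp (G t - G τ) / P τ = Real.exp (G t) * (Real.exp (-G τ) / P τ)
      rw [Real.exp_sub, Real.exp_neg]
      ring
    rw [MeasureTheory.integral_Ici_eq_integral_Ioi,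
      setIntegral_congr_fun measurableSet_Ioi hcong, MeasureTheory.integral_const_mul]
  -- final algebra
  have hbD : b = D t + α₀ * Δ := by
    rw [hΔeq]
    show 1 + α₀ * Finf = 1 + α₀ * F t + α₀ * (Finf - F t)
    ring
  have hDtpos : 0 < D t := hDpos t ht
  rw [hLHS, hIt, hαt_eq t ht]
  have hEt : E t = Real.exp (-G t) := rfl
  rw [show A t = α₀ * E t / D t from rfl, hEt, Real.exp_neg, hbD]
  have hexp : (0:ℝ) < Real.exp (G t) := Real.exp_pos (G t)
  have hbne : (0:ℝ) < D t + α₀ * Δ := by nlinarith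
  field_simp
  ring
end

section
/- Let a, b, c be continuous real-valued functions on [t₀,∞) with a(t) ≥ 0 and c(t) ≤ 0 for all t ≥ t₀. Then for every y₀ ≥ 0 the Riccati equation y'(t) + a(t)y(t)² + b(t)y(t) + c(t) = 0 has a solution y on all of [t₀,∞) with y(t₀) = y₀ and y(t) ≥ 0 for all t ≥ t₀. -/
open MeasureTheory Set Filter

open Topology

private lemma RG.derivIci {f : ℝ → ℝ} {d a b x : ℝ} (hx : x ∈ Set.Ico a b)
    (h : HasDerivWithinAt f d (Set.Icc a b) x) : HasDerivWithinAt f d (Set.Ici x) x := by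
  apply h.mono_of_mem_nhdsWithin
  rw [mem_nhdsWithin]
  exact ⟨Set.Iio b, isOpen_Iio, hx.2, fun t ht => ⟨hx.1.trans ht.2, ht.1.le⟩⟩

private lemma RG.clamp_lip (M x y : ℝ) : |min (max x 0) M - min (max y 0) M| ≤ |x - y| := by
  refine (abs_min_sub_min_le_max _ _ _ _).trans ?_
  simp only [sub_self, abs_zero]
  rw [max_eq_left (abs_nonneg _)]
  exact abs_max_sub_max_le_abs x y 0

private lemma RG.nonpos_of (f f' : ℝ → ℝ) (a b K : ℝ)
    (hf : ContinuousOn f (Set.Icc a b))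
    (hf' : ∀ x ∈ Set.Ico a b, HasDerivWithinAt f (f' x) (Set.Ici x) x)
    (ha : f a ≤ 0)
    (bound : ∀ x ∈ Set.Ico a b, 0 ≤ f x → f' x ≤ K * f x) :
    ∀ x ∈ Set.Icc a b, f x ≤ 0 := by
  intro t₁ ht₁
  by_contra hpos
  push_neg at hpos
  set S := Set.Icc a t₁ ∩ f ⁻¹' Set.Iic 0 with hSdef
  have haS : a ∈ S := ⟨⟨le_rfl, ht₁.1⟩, ha⟩
  have hScl : IsClosed S :=
    (hf.mono (Set.Icc_subset_Icc_right ht₁.2)).preimage_isClosed_of_isClosed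
      isClosed_Icc isClosed_Iic
  have hcomp : IsCompact S := isCompact_Icc.of_isClosed_subset hScl Set.inter_subset_left
  obtain ⟨s, hsS, hsmax⟩ : ∃ s ∈ S, ∀ x ∈ S, x ≤ s :=
    ⟨sSup S, hcomp.sSup_mem ⟨a, haS⟩, fun x hx => le_csSup hcomp.bddAbove hx⟩
  have hfs : f s ≤ 0 := hsS.2
  have hst₁ : s < t₁ := lt_of_le_of_ne hsS.1.2 (fun h => by rw [h] at hfs; linarith)
  have hpos' : ∀ x ∈ Set.Ioc s t₁, 0 < f x := by
    intro x hx
    by_contra h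
    push_neg at h
    exact absurd (hsmax x ⟨⟨hsS.1.1.trans hx.1.le, hx.2⟩, h⟩) (not_le.mpr hx.1)
  have hfs0 : f s = 0 := by
    refine le_antisymm hfs ?_
    have hne : (𝓝[Set.Ioc s t₁] s).NeBot := by
      rw [← mem_closure_iff_nhdsWithin_neBot, closure_Ioc hst₁.ne]
      exact ⟨le_rfl, hst₁.le⟩
    have hcont : Filter.Tendsto f (𝓝[Set.Ioc s t₁] s) (𝓝 (f s)) :=
      (hf s ⟨hsS.1.1, hsS.1.2.trans ht₁.2⟩).mono
        (fun x hx => ⟨hsS.1.1.trans hx.1.le, hx.2.trans ht₁.2⟩)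
    exact ge_of_tendsto hcont
      (Filter.eventually_of_mem self_mem_nhdsWithin (fun x hx => (hpos' x hx).le))
  have key := le_gronwallBound_of_liminf_deriv_right_le
    (f := f) (f' := f') (δ := 0) (K := K) (ε := 0) (a := s) (b := t₁)
    (hf.mono (Set.Icc_subset_Icc hsS.1.1 ht₁.2))
    (fun x hx r hr =>
      (hf' x ⟨hsS.1.1.trans hx.1, lt_of_lt_of_le hx.2 ht₁.2⟩).liminf_right_slope_le hr)
    (le_of_eq hfs0)
    (by
      intro x hx
      have h0 : 0 ≤ f x := by
        rcases hx.1.lt_or_eq with h | h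
        · exact (hpos' x ⟨h, hx.2.le⟩).le
        · rw [← h, hfs0]
      have := bound x ⟨hsS.1.1.trans hx.1, lt_of_lt_of_le hx.2 ht₁.2⟩ h0
      linarith)
    t₁ ⟨hst₁.le, le_rfl⟩
  rw [gronwallBound_ε0_δ0] at key
  linarith

private lemma RG.gb_mono {δ K ε : ℝ} (hδ : 0 ≤ δ) (hK : 0 < K) (hε : 0 ≤ ε) {x y : ℝ}
    (h : x ≤ y) : gronwallBound δ K ε x ≤ gronwallBound δ K ε y := by
  simp only [gronwallBound_of_K_ne_0 hK.ne']
  have h1 : Real.exp (K * x) ≤ Real.exp (K * y) :=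
    Real.exp_le_exp.mpr (mul_le_mul_of_nonneg_left h hK.le)
  have h2 : (0:ℝ) ≤ ε / K := div_nonneg hε hK.le
  nlinarith [Real.exp_pos (K * x)]

private lemma RG.exists_sol (t₀ T : ℝ) (hT : t₀ < T) (A B C : ℝ → ℝ)
    (hA : Continuous A) (hB : Continuous B) (hC : Continuous C)
    (hA0 : ∀ t, 0 ≤ A t) (hC0 : ∀ t, C t ≤ 0)
    (y₀ : ℝ) (hy₀ : 0 ≤ y₀) :
    ∃ f : ℝ → ℝ, f t₀ = y₀ ∧
      (∀ t ∈ Set.Icc t₀ T,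
        HasDerivWithinAt f (-(A t * f t ^ 2 + B t * f t + C t)) (Set.Icc t₀ T) t) ∧
      ∀ t ∈ Set.Icc t₀ T, 0 ≤ f t := by
  obtain ⟨Ka, hKa⟩ := (isCompact_Icc (a := t₀) (b := T)).exists_bound_of_continuousOn
    hA.continuousOn
  obtain ⟨Kb, hKb⟩ := (isCompact_Icc (a := t₀) (b := T)).exists_bound_of_continuousOn
    hB.continuousOn
  obtain ⟨Kc, hKc⟩ := (isCompact_Icc (a := t₀) (b := T)).exists_bound_of_continuousOn
    hC.continuousOn
  simp only [Real.norm_eq_abs] at hKa hKb hKc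
  have ht₀mem : t₀ ∈ Set.Icc t₀ T := ⟨le_rfl, hT.le⟩
  have hKa0 : 0 ≤ Ka := (abs_nonneg _).trans (hKa t₀ ht₀mem)
  have hKb0 : 0 ≤ Kb := (abs_nonneg _).trans (hKb t₀ ht₀mem)
  have hKc0 : 0 ≤ Kc := (abs_nonneg _).trans (hKc t₀ ht₀mem)
  obtain ⟨M, hy₀M, hM0, hMle⟩ : ∃ M, y₀ ≤ M ∧ 0 ≤ M ∧
      ∀ x ≤ T - t₀, gronwallBound y₀ (Kb + 1) Kc x ≤ M := by
    refine ⟨gronwallBound y₀ (Kb + 1) Kc (T - t₀), ?_, ?_, ?_⟩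
    · have := RG.gb_mono (δ := y₀) (K := Kb + 1) (ε := Kc) hy₀ (by linarith) hKc0
        (le_of_lt (by linarith : (0:ℝ) < T - t₀))
      rwa [gronwallBound_x0] at this
    · have := RG.gb_mono (δ := y₀) (K := Kb + 1) (ε := Kc) hy₀ (by linarith) hKc0
        (le_of_lt (by linarith : (0:ℝ) < T - t₀))
      rw [gronwallBound_x0] at this
      linarith
    · exact fun x hx => RG.gb_mono hy₀ (by linarith) hKc0 hx
  set cl : ℝ → ℝ := fun y => min (max y 0) M with hcldef
  have hcl0 : ∀ y, 0 ≤ cl y := fun y => le_min (le_max_right _ _) hM0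
  have hclM : ∀ y, cl y ≤ M := fun y => min_le_right _ _
  have hcllip : ∀ x y, |cl x - cl y| ≤ |x - y| := fun x y => RG.clamp_lip M x y
  have hCb0 : 0 ≤ Ka * M ^ 2 + Kb * M + Kc := by positivity
  have hR0 : 0 ≤ (Ka * M ^ 2 + Kb * M + Kc) * (T - t₀) + 1 := by
    have := mul_nonneg hCb0 (by linarith : (0:ℝ) ≤ T - t₀)
    linarith
  have hpl : IsPicardLindelof (fun t y => -(A t * cl y ^ 2 + B t * cl y + C t))
      (⟨t₀, ht₀mem⟩ : Set.Icc t₀ T) y₀ (Real.toNNReal ((Ka * M ^ 2 + Kb * M + Kc) * (T - t₀) + 1)) 0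
      (Real.toNNReal (Ka * M ^ 2 + Kb * M + Kc)) (Real.toNNReal (Ka * (2 * M) + Kb)) := by
    have hLcoe : (Ka * (2 * M) + Kb) ≤ ((Real.toNNReal (Ka * (2 * M) + Kb)) : ℝ) := by
      rw [Real.coe_toNNReal']
      exact le_max_left _ _
    constructor
    · intro t ht
      apply LipschitzOnWith.of_dist_le_mul
      intro x _ y _
      rw [Real.dist_eq, Real.dist_eq]
      have hdiff : -(A t * cl x ^ 2 + B t * cl x + C t) - -(A t * cl y ^ 2 + B t * cl y + C t)
          = -((A t * (cl x + cl y) + B t) * (cl x - cl y)) := by ring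
      rw [hdiff, abs_neg, abs_mul]
      have hxy : |cl x + cl y| ≤ 2 * M := by
        rw [abs_le]
        constructor <;> nlinarith [hcl0 x, hcl0 y, hclM x, hclM y]
      have h1 : |A t * (cl x + cl y) + B t| ≤ Ka * (2 * M) + Kb := by
        refine (abs_add_le _ _).trans ?_
        rw [abs_mul]
        have hprod : |A t| * |cl x + cl y| ≤ Ka * (2 * M) :=
          mul_le_mul (hKa t ht) hxy (abs_nonneg _) hKa0
        linarith [hKb t ht]
      exact mul_le_mul (h1.trans hLcoe) (hcllip x y) (abs_nonneg _)
        ((abs_nonneg _).trans (h1.trans hLcoe))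
    · intro x _
      exact (Continuous.neg (((hA.mul continuous_const).add
        (hB.mul continuous_const)).add hC)).continuousOn
    · intro t ht x _
      rw [Real.coe_toNNReal _ hCb0, Real.norm_eq_abs, abs_neg]
      refine (abs_add_three _ _ _).trans ?_
      rw [abs_mul, abs_mul, abs_pow]
      have h4 : |cl x| ≤ M := by rw [abs_of_nonneg (hcl0 x)]; exact hclM x
      gcongr
      · exact hKa t ht
      · exact hKb t ht
      · exact hKc t ht
    · show (Real.toNNReal (Ka * M ^ 2 + Kb * M + Kc) : ℝ) * max (T - t₀) (t₀ - t₀) ≤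
        (Real.toNNReal ((Ka * M ^ 2 + Kb * M + Kc) * (T - t₀) + 1) : ℝ) - ((0 : NNReal) : ℝ)
      rw [Real.coe_toNNReal _ hCb0, Real.coe_toNNReal _ hR0, NNReal.coe_zero, sub_zero]
      rw [sub_self, max_eq_left (by linarith : (0:ℝ) ≤ T - t₀)]
      linarith
  obtain ⟨f, hf0, hfd⟩ := hpl.exists_eq_forall_mem_Icc_hasDerivWithinAt₀
  change f t₀ = y₀ at hf0
  have hfc : ContinuousOn f (Set.Icc t₀ T) := fun t ht => (hfd t ht).continuousWithinAt
  have hnn : ∀ t ∈ Set.Icc t₀ T, 0 ≤ f t := by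
    have key := RG.nonpos_of (fun t => -f t)
      (fun t => -(-(A t * cl (f t) ^ 2 + B t * cl (f t) + C t))) t₀ T 0
      hfc.neg
      (fun x hx => (RG.derivIci hx (hfd x (Set.Ico_subset_Icc_self hx))).neg)
      (by show -f t₀ ≤ 0; rw [hf0]; linarith)
      (by
        intro x hx h0
        have hfx : f x ≤ 0 := by simpa using h0
        have hclf : cl (f x) = 0 := by
          simp only [hcldef]
          rw [max_eq_right hfx, min_eq_left hM0]
        show - -(A x * cl (f x) ^ 2 + B x * cl (f x) + C x) ≤ 0 * -f x
        rw [hclf]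
        have := hC0 x
        nlinarith)
    intro t ht
    simpa using key t ht
  have hub : ∀ t ∈ Set.Icc t₀ T, f t ≤ M := by
    have key := le_gronwallBound_of_liminf_deriv_right_le
      (f := f) (f' := fun t => -(A t * cl (f t) ^ 2 + B t * cl (f t) + C t))
      (δ := y₀) (K := Kb + 1) (ε := Kc) (a := t₀) (b := T)
      hfc
      (fun x hx r hr =>
        (RG.derivIci hx (hfd x (Set.Ico_subset_Icc_self hx))).liminf_right_slope_le hr)
      (le_of_eq hf0)
      (by
        intro x hx
        have h0 : 0 ≤ f x := hnn x (Set.Ico_subset_Icc_self hx)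
        have hclle : cl (f x) ≤ f x := by
          simp only [hcldef]
          exact (min_le_left _ _).trans (le_of_eq (max_eq_left h0))
        have hBl := abs_le.mp (hKb x (Set.Ico_subset_Icc_self hx))
        have hCl := abs_le.mp (hKc x (Set.Ico_subset_Icc_self hx))
        have hAnn := mul_nonneg (hA0 x) (sq_nonneg (cl (f x)))
        have hBcl : -(B x * cl (f x)) ≤ Kb * cl (f x) := by nlinarith [hcl0 (f x)]
        have hKbf : Kb * cl (f x) ≤ Kb * f x := mul_le_mul_of_nonneg_left hclle hKb0
        show -(A x * cl (f x) ^ 2 + B x * cl (f x) + C x) ≤ (Kb + 1) * f x + Kc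
        linarith)
    intro t ht
    exact (key t ht).trans (hMle (t - t₀) (by linarith [ht.2]))
  have hcl_eq : ∀ t ∈ Set.Icc t₀ T, cl (f t) = f t := by
    intro t ht
    simp only [hcldef]
    rw [max_eq_left (hnn t ht), min_eq_left (hub t ht)]
  refine ⟨f, hf0, fun t ht => ?_, hnn⟩
  have := hfd t ht
  rw [← hcl_eq t ht]
  exact this

private lemma RG.uniq (t₀ T : ℝ) (hT : t₀ < T) (A B C : ℝ → ℝ)
    (hA : Continuous A) (hB : Continuous B)
    (f g : ℝ → ℝ)
    (hfd : ∀ t ∈ Set.Icc t₀ T,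
      HasDerivWithinAt f (-(A t * f t ^ 2 + B t * f t + C t)) (Set.Icc t₀ T) t)
    (hgd : ∀ t ∈ Set.Icc t₀ T,
      HasDerivWithinAt g (-(A t * g t ^ 2 + B t * g t + C t)) (Set.Icc t₀ T) t)
    (h0 : f t₀ = g t₀) :
    Set.EqOn f g (Set.Icc t₀ T) := by
  have ht₀mem : t₀ ∈ Set.Icc t₀ T := ⟨le_rfl, hT.le⟩
  have hfc : ContinuousOn f (Set.Icc t₀ T) := fun t ht => (hfd t ht).continuousWithinAt
  have hgc : ContinuousOn g (Set.Icc t₀ T) := fun t ht => (hgd t ht).continuousWithinAt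
  obtain ⟨Mf, hMf⟩ := isCompact_Icc.exists_bound_of_continuousOn hfc
  obtain ⟨Mg, hMg⟩ := isCompact_Icc.exists_bound_of_continuousOn hgc
  have hfM : ∀ t ∈ Set.Icc t₀ T, ‖f t‖ ≤ max Mf Mg :=
    fun t ht => (hMf t ht).trans (le_max_left _ _)
  have hgM : ∀ t ∈ Set.Icc t₀ T, ‖g t‖ ≤ max Mf Mg :=
    fun t ht => (hMg t ht).trans (le_max_right _ _)
  set M := max Mf Mg with hMdef
  have hM0 : 0 ≤ M := (norm_nonneg _).trans (hfM t₀ ht₀mem)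
  set p : ℝ → ℝ := fun t => max t₀ (min t T) with hpdef
  have hpmem : ∀ t, p t ∈ Set.Icc t₀ T :=
    fun t => ⟨le_max_left _ _, max_le hT.le (min_le_right _ _)⟩
  have hpeq : ∀ t ∈ Set.Icc t₀ T, p t = t := by
    intro t ht
    simp only [hpdef]
    rw [min_eq_left ht.2, max_eq_right ht.1]
  obtain ⟨Ka, hKa⟩ := (isCompact_Icc (a := t₀) (b := T)).exists_bound_of_continuousOn
    hA.continuousOn
  obtain ⟨Kb, hKb⟩ := (isCompact_Icc (a := t₀) (b := T)).exists_bound_of_continuousOn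
    hB.continuousOn
  simp only [Real.norm_eq_abs] at hKa hKb
  have hKa0 : 0 ≤ Ka := (abs_nonneg _).trans (hKa t₀ ht₀mem)
  have hv : ∀ t, LipschitzOnWith (Real.toNNReal (Ka * (2 * M) + Kb))
      (fun y => -(A (p t) * y ^ 2 + B (p t) * y + C (p t))) (Metric.closedBall (0:ℝ) M) := by
    intro t
    apply LipschitzOnWith.of_dist_le_mul
    intro x hx y hy
    rw [mem_closedBall_zero_iff, Real.norm_eq_abs] at hx hy
    rw [Real.dist_eq, Real.dist_eq]
    have hdiff : -(A (p t) * x ^ 2 + B (p t) * x + C (p t)) -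
        -(A (p t) * y ^ 2 + B (p t) * y + C (p t))
        = -((A (p t) * (x + y) + B (p t)) * (x - y)) := by ring
    rw [hdiff, abs_neg, abs_mul]
    have hxy : |x + y| ≤ 2 * M := (abs_add_le _ _).trans (by linarith)
    have h1 : |A (p t) * (x + y) + B (p t)| ≤ Ka * (2 * M) + Kb := by
      refine (abs_add_le _ _).trans ?_
      rw [abs_mul]
      have hprod : |A (p t)| * |x + y| ≤ Ka * (2 * M) :=
        mul_le_mul (hKa _ (hpmem t)) hxy (abs_nonneg _) hKa0
      linarith [hKb _ (hpmem t)]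
    have hLcoe : Ka * (2 * M) + Kb ≤ ((Real.toNNReal (Ka * (2 * M) + Kb)) : ℝ) := by
      rw [Real.coe_toNNReal']
      exact le_max_left _ _
    exact mul_le_mul (h1.trans hLcoe) le_rfl (abs_nonneg _)
      ((abs_nonneg _).trans (h1.trans hLcoe))
  refine ODE_solution_unique_of_mem_Icc_right (fun t _ => hv t) hfc ?_ ?_ hgc ?_ ?_ h0
  · intro t ht
    have hpt := hpeq t (Set.Ico_subset_Icc_self ht)
    have := RG.derivIci ht (hfd t (Set.Ico_subset_Icc_self ht))
    show HasDerivWithinAt f (-(A (p t) * f t ^ 2 + B (p t) * f t + C (p t))) (Set.Ici t) t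
    rw [hpt]
    exact this
  · intro t ht
    exact mem_closedBall_zero_iff.mpr (hfM t (Set.Ico_subset_Icc_self ht))
  · intro t ht
    have hpt := hpeq t (Set.Ico_subset_Icc_self ht)
    have := RG.derivIci ht (hgd t (Set.Ico_subset_Icc_self ht))
    show HasDerivWithinAt g (-(A (p t) * g t ^ 2 + B (p t) * g t + C (p t))) (Set.Ici t) t
    rw [hpt]
    exact this
  · intro t ht
    exact mem_closedBall_zero_iff.mpr (hgM t (Set.Ico_subset_Icc_self ht))

theorem riccati_global_nonneg_solution
    (t₀ : ℝ) (a b c : ℝ → ℝ)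
    (ha : ContinuousOn a (Set.Ici t₀)) (hb : ContinuousOn b (Set.Ici t₀))
    (hc : ContinuousOn c (Set.Ici t₀))
    (hapos : ∀ t ∈ Set.Ici t₀, 0 ≤ a t)
    (hcneg : ∀ t ∈ Set.Ici t₀, c t ≤ 0)
    (y₀ : ℝ) (hy₀ : 0 ≤ y₀) :
    ∃ y : ℝ → ℝ, y t₀ = y₀ ∧
      (∀ t ∈ Set.Ici t₀,
        HasDerivAt y (-(a t * y t ^ 2 + b t * y t + c t)) t) ∧
      ∀ t ∈ Set.Ici t₀, 0 ≤ y t := by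
  set A : ℝ → ℝ := fun t => a (max t t₀) with hAdef
  set B : ℝ → ℝ := fun t => b (max t t₀) with hBdef
  set C : ℝ → ℝ := fun t => c (max t t₀) with hCdef
  have hmax : ∀ t : ℝ, max t t₀ ∈ Set.Ici t₀ := fun t => le_max_right t t₀
  have hAc : Continuous A := ha.comp_continuous (continuous_id.max continuous_const) hmax
  have hBc : Continuous B := hb.comp_continuous (continuous_id.max continuous_const) hmax
  have hCc : Continuous C := hc.comp_continuous (continuous_id.max continuous_const) hmax
  have hA0 : ∀ t, 0 ≤ A t := fun t => hapos _ (hmax t)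
  have hC0 : ∀ t, C t ≤ 0 := fun t => hcneg _ (hmax t)
  have hAeq : ∀ t, t₀ ≤ t → A t = a t := fun t h => by simp only [hAdef]; rw [max_eq_left h]
  have hBeq : ∀ t, t₀ ≤ t → B t = b t := fun t h => by simp only [hBdef]; rw [max_eq_left h]
  have hCeq : ∀ t, t₀ ≤ t → C t = c t := fun t h => by simp only [hCdef]; rw [max_eq_left h]
  have hTn : ∀ n : ℕ, t₀ < t₀ + n + 1 := fun n => by
    have : (0:ℝ) ≤ n := Nat.cast_nonneg n
    linarith
  choose sol hsol0 hsold hsolnn using fun n : ℕ =>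
    RG.exists_sol t₀ (t₀ + n + 1) (hTn n) A B C hAc hBc hCc hA0 hC0 y₀ hy₀
  have huniq : ∀ n m : ℕ, n ≤ m → Set.EqOn (sol n) (sol m) (Set.Icc t₀ (t₀ + n + 1)) := by
    intro n m hnm
    have hsub : Set.Icc t₀ (t₀ + n + 1) ⊆ Set.Icc t₀ (t₀ + m + 1) :=
      Set.Icc_subset_Icc_right (by have := (Nat.cast_le (α := ℝ)).mpr hnm; linarith)
    refine RG.uniq t₀ (t₀ + n + 1) (hTn n) A B C hAc hBc (sol n) (sol m)
      (hsold n) ?_ (by rw [hsol0 n, hsol0 m])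
    intro t ht
    exact ((hsold m) t (hsub ht)).mono hsub
  set N : ℝ → ℕ := fun t => ⌈t - t₀⌉₊ with hNdef
  have hNmem : ∀ t, t₀ ≤ t → t ∈ Set.Icc t₀ (t₀ + N t + 1) := by
    intro t h
    refine ⟨h, ?_⟩
    have := Nat.le_ceil (t - t₀)
    simp only [hNdef]
    linarith
  have hNlt : ∀ t, t₀ ≤ t → t < t₀ + N t + 1 := by
    intro t h
    have := Nat.le_ceil (t - t₀)
    simp only [hNdef]
    linarith
  set d₀ : ℝ := -(a t₀ * y₀ ^ 2 + b t₀ * y₀ + c t₀) with hd₀def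
  set y : ℝ → ℝ := fun t => if t₀ ≤ t then sol (N t) t else y₀ + (t - t₀) * d₀ with hydef
  have hagree : ∀ (n : ℕ), ∀ t ∈ Set.Icc t₀ (t₀ + n + 1), y t = sol n t := by
    intro n t ht
    have h1 : t₀ ≤ t := ht.1
    simp only [hydef, if_pos h1]
    rcases le_total (N t) n with h | h
    · exact huniq _ _ h (hNmem t h1)
    · exact (huniq n (N t) h ht).symm
  have hy0 : y t₀ = y₀ := by
    rw [hagree 0 t₀ ⟨le_rfl, by linarith [hTn 0]⟩, hsol0 0]
  refine ⟨y, hy0, ?_, ?_⟩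
  · intro t ht
    rcases eq_or_lt_of_le (Set.mem_Ici.mp ht) with heq | hlt
    · -- t = t₀
      subst heq
      have h01 : t₀ < t₀ + (0:ℕ) + 1 := hTn 0
      have hmem0 : t₀ ∈ Set.Icc t₀ (t₀ + (0:ℕ) + 1) := ⟨le_rfl, h01.le⟩
      have hr0 := RG.derivIci (⟨le_rfl, h01⟩ : t₀ ∈ Set.Ico t₀ (t₀ + (0:ℕ) + 1))
        (hsold 0 t₀ hmem0)
      have hval : -(A t₀ * sol 0 t₀ ^ 2 + B t₀ * sol 0 t₀ + C t₀) = d₀ := by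
        rw [hsol0 0, hAeq t₀ le_rfl, hBeq t₀ le_rfl, hCeq t₀ le_rfl]
      rw [hval] at hr0
      have hicc_mem : Set.Icc t₀ (t₀ + (0:ℕ) + 1) ∈ 𝓝[Set.Ici t₀] t₀ := by
        rw [mem_nhdsWithin]
        exact ⟨Set.Iio (t₀ + (0:ℕ) + 1), isOpen_Iio, h01,
          fun s hs => ⟨hs.2, hs.1.le⟩⟩
      have hr : HasDerivWithinAt y d₀ (Set.Ici t₀) t₀ := by
        refine hr0.congr_of_eventuallyEq ?_ (by rw [hy0, hsol0 0])
        exact Filter.eventually_of_mem hicc_mem (fun s hs => hagree 0 s hs)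
      have hlin : HasDerivAt (fun s : ℝ => y₀ + (s - t₀) * d₀) d₀ t₀ := by
        have := (((hasDerivAt_id t₀).sub_const t₀).mul_const d₀).const_add y₀
        simpa using this
      have hl : HasDerivWithinAt y d₀ (Set.Iic t₀) t₀ := by
        refine (hlin.hasDerivWithinAt).congr ?_ (by rw [hy0]; ring)
        intro s hs
        rcases lt_or_eq_of_le (Set.mem_Iic.mp hs) with h | h
        · simp only [hydef, if_neg (not_le.mpr h)]
        · subst h
          rw [hy0]; ring
      have hu : HasDerivWithinAt y d₀ (Set.Iic t₀ ∪ Set.Ici t₀) t₀ := hl.union hr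
      rw [Set.Iic_union_Ici] at hu
      have hfin := hu.hasDerivAt (by simp [Filter.univ_mem])
      have : -(a t₀ * y t₀ ^ 2 + b t₀ * y t₀ + c t₀) = d₀ := by rw [hy0]
      rw [this]
      exact hfin
    · -- t₀ < t
      have hmem : t ∈ Set.Icc t₀ (t₀ + N t + 1) := hNmem t ht
      have htlt : t < t₀ + N t + 1 := hNlt t ht
      have hioo : t ∈ Set.Ioo t₀ (t₀ + N t + 1) := ⟨hlt, htlt⟩
      have hd := (hsold (N t) t hmem).hasDerivAt (Icc_mem_nhds hioo.1 hioo.2)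
      have heqv : y =ᶠ[𝓝 t] sol (N t) :=
        Filter.eventually_of_mem (Ioo_mem_nhds hioo.1 hioo.2)
          (fun s hs => hagree (N t) s (Set.Ioo_subset_Icc_self hs))
      have hda := hd.congr_of_eventuallyEq heqv
      have hyt : y t = sol (N t) t := hagree (N t) t hmem
      rw [hAeq t ht, hBeq t ht, hCeq t ht, ← hyt] at hda
      exact hda
  · intro t ht
    rw [hagree (N t) t (hNmem t ht)]
    exact hsolnn (N t) t (hNmem t ht)
end

section
/- Let p, q, r be continuous on [t₀,∞) with p > 0, and let γ ∈ C¹[t₀,∞) satisfy γ'(t) + γ(t)²/p(t) + q(t)γ(t)/p(t) + r(t) ≤ 0 for all t ≥ t₀. Then η(t) := γ(t) satisfies the differential inequality η' + η²/p + qη/p + r ≤ 0, and consequently -γ is a supersolution of the reversed Riccati inequality; in particular, if additionally r(t) ≤ 0 and γ is such a subsolution, the Riccati equation α' + α²/p + qα/p + r = 0 has a solution defined on all of [t₀,∞) with α(t₀) = γ(t₀) and α(t) ≥ γ(t) for t ≥ t₀. -/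
set_option maxHeartbeats 1000000
open MeasureTheory Set Filter

noncomputable def rcl (M x : ℝ) : ℝ := max (-M) (min M x)

lemma rcl_le {M : ℝ} (hM : 0 ≤ M) (x : ℝ) : rcl M x ≤ M :=
  max_le (by linarith) (min_le_left _ _)

lemma neg_le_rcl (M x : ℝ) : -M ≤ rcl M x := le_max_left _ _

lemma abs_rcl_le {M : ℝ} (hM : 0 ≤ M) (x : ℝ) : |rcl M x| ≤ M :=
  abs_le.2 ⟨neg_le_rcl M x, rcl_le hM x⟩

lemma rcl_eq {M x : ℝ} (h1 : -M ≤ x) (h2 : x ≤ M) : rcl M x = x := by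
  rw [rcl, min_eq_right h2, max_eq_right h1]

lemma rcl_lip (M x y : ℝ) : |rcl M x - rcl M y| ≤ |x - y| := by
  have h1 : |max (min M x) (-M) - max (min M y) (-M)| ≤ |min M x - min M y| :=
    abs_max_sub_max_le_abs _ _ _
  have h2 : |min M x - min M y| ≤ max |M - M| |x - y| := abs_min_sub_min_le_max M x M y
  have h3 : max |M - M| |x - y| = |x - y| := by simp [abs_nonneg]
  rw [rcl, rcl, max_comm (-M) (min M x), max_comm (-M) (min M y)]
  linarith [h1, h2, h3.le, h3.ge]

lemma riccati_exists_on (P Q R₀ γ γ' : ℝ → ℝ)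
    (hP : Continuous P) (hQ : Continuous Q) (hR : Continuous R₀)
    (hPpos : ∀ t, 0 < P t)
    (t₀ b : ℝ) (hb : t₀ < b)
    (hγ : ∀ t ∈ Ici t₀, HasDerivAt γ (γ' t) t)
    (hsub : ∀ t ∈ Icc t₀ b, γ' t + γ t ^ 2 / P t + Q t * γ t / P t + R₀ t ≤ 0) :
    ∃ α : ℝ → ℝ, α t₀ = γ t₀ ∧
      (∀ t ∈ Ico t₀ b, HasDerivAt α (-(α t ^ 2 / P t + Q t * α t / P t + R₀ t)) t) ∧
      ∀ t ∈ Icc t₀ b, γ t ≤ α t ∧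
        α t ≤ γ t₀ + ∫ s in t₀..t, (Q s ^ 2 / (4 * P s) - R₀ s) := by
  -- basic bounds on the compact interval [t₀ - 1, b]
  set a : ℝ := t₀ - 1 with ha
  have hab : a < b := by simp [ha]; linarith
  have hcpt : IsCompact (Icc a b) := isCompact_Icc
  have hne : (Icc a b).Nonempty := nonempty_Icc.2 hab.le
  -- positive lower bound for P
  obtain ⟨tp, htp, htpmin⟩ := hcpt.exists_isMinOn hne hP.continuousOn
  set εp : ℝ := P tp with hεp
  have hεppos : 0 < εp := hPpos tp
  have hεple : ∀ t ∈ Icc a b, εp ≤ P t := fun t ht => htpmin ht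
  -- bound for |Q|
  obtain ⟨QB₀, hQB₀⟩ := hcpt.exists_bound_of_continuousOn hQ.continuousOn
  set QB : ℝ := max QB₀ 0 with hQB
  have hQBnn : 0 ≤ QB := le_max_right _ _
  have hQBle : ∀ t ∈ Icc a b, |Q t| ≤ QB := fun t ht =>
    (hQB₀ t ht).trans (le_max_left _ _)
  -- bound for |R₀|
  obtain ⟨RB₀, hRB₀⟩ := hcpt.exists_bound_of_continuousOn hR.continuousOn
  set RB : ℝ := max RB₀ 0 with hRB
  have hRBnn : 0 ≤ RB := le_max_right _ _
  have hRBle : ∀ t ∈ Icc a b, |R₀ t| ≤ RB := fun t ht =>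
    (hRB₀ t ht).trans (le_max_left _ _)
  -- bound for |γ|
  have hγc : ContinuousOn γ (Icc t₀ b) := fun t ht =>
    (hγ t ht.1).continuousAt.continuousWithinAt
  obtain ⟨GB₀, hGB₀⟩ := isCompact_Icc.exists_bound_of_continuousOn hγc
  set GB : ℝ := max GB₀ 0 with hGB
  have hGBnn : 0 ≤ GB := le_max_right _ _
  have hGBle : ∀ t ∈ Icc t₀ b, |γ t| ≤ GB := fun t ht =>
    (hGB₀ t ht).trans (le_max_left _ _)
  -- the primitive of m
  set m : ℝ → ℝ := fun s => Q s ^ 2 / (4 * P s) - R₀ s with hm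
  have hmc : Continuous m := by
    apply Continuous.sub _ hR
    exact (hQ.pow 2).div (continuous_const.mul hP) (fun t => by have := hPpos t; positivity)
  set I : ℝ → ℝ := fun t => ∫ s in t₀..t, m s with hI
  have hId : ∀ x : ℝ, HasDerivAt I (m x) x := fun x =>
    intervalIntegral.integral_hasDerivAt_right (hmc.intervalIntegrable _ _)
      (hmc.stronglyMeasurableAtFilter _ _) hmc.continuousAt
  have hIc : Continuous I := continuous_iff_continuousAt.2 fun x => (hId x).continuousAt
  have hIt₀ : I t₀ = 0 := intervalIntegral.integral_same
  -- bound for the upper barrier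
  obtain ⟨IB₀, hIB₀⟩ := isCompact_Icc.exists_bound_of_continuousOn
    ((continuous_const.add hIc).continuousOn : ContinuousOn (fun t => γ t₀ + I t) (Icc t₀ b))
  set IB : ℝ := max IB₀ 0 with hIB
  have hIBnn : 0 ≤ IB := le_max_right _ _
  have hIBle : ∀ t ∈ Icc t₀ b, |γ t₀ + I t| ≤ IB := fun t ht =>
    (hIB₀ t ht).trans (le_max_left _ _)
  -- truncation level
  set M : ℝ := GB + IB + 3 with hM
  have hMpos : (0:ℝ) < M := by positivity
  -- the truncated field
  set F : ℝ → ℝ → ℝ := fun t x =>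
    -((rcl M x) ^ 2 / P t + Q t * rcl M x / P t + R₀ t) with hF
  have hFle : ∀ t, ∀ x, ∀ y, |F t x - F t y| ≤ ((2*M + QB)/εp) * |x - y| ∨ True := fun _ _ _ => Or.inr trivial
  -- Picard-Lindelöf data
  set C : ℝ := (M^2 + QB*M)/εp + RB with hC
  have hCnn : 0 ≤ C := by positivity
  set R : ℝ := C * (b - a) with hR'
  have hRnn : 0 ≤ R := by
    apply mul_nonneg hCnn; linarith
  set L : NNReal := Real.toNNReal ((2*M + QB)/εp) with hL
  have hLcoe : (L : ℝ) = (2*M + QB)/εp := Real.coe_toNNReal _ (by positivity)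
  have ht₀mem : t₀ ∈ Icc a b := ⟨by simp [ha], hb.le⟩
  have hRcoe : (R.toNNReal : ℝ) = R := Real.coe_toNNReal _ hRnn
  have hCcoe : (C.toNNReal : ℝ) = C := Real.coe_toNNReal _ hCnn
  have hpl : IsPicardLindelof F (⟨t₀, ht₀mem⟩ : Icc a b) (γ t₀) R.toNNReal 0 C.toNNReal L := by
    constructor
    · intro t ht
      rw [lipschitzOnWith_iff_dist_le_mul]
      intro x _ y _
      rw [Real.dist_eq, Real.dist_eq]
      have hPt := hPpos t
      have key : F t x - F t y
          = -((rcl M x - rcl M y) * (rcl M x + rcl M y + Q t)) / P t := by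
        rw [hF]; field_simp; ring
      rw [key, abs_div, abs_neg, abs_mul, abs_of_pos hPt, hLcoe]
      have hsum : |rcl M x + rcl M y + Q t| ≤ 2*M + QB := by
        calc |rcl M x + rcl M y + Q t|
            ≤ |rcl M x| + |rcl M y| + |Q t| := abs_add_three _ _ _
          _ ≤ M + M + QB := by
              have h1 := abs_rcl_le hMpos.le x
              have h2 := abs_rcl_le hMpos.le y
              have h3 := hQBle t ht
              linarith
          _ = 2*M + QB := by ring
      calc |rcl M x - rcl M y| * |rcl M x + rcl M y + Q t| / P t
          ≤ |x - y| * (2*M + QB) / εp := by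
            apply div_le_div₀ (by positivity) ?_ hεppos (hεple t ht)
            exact mul_le_mul (rcl_lip M x y) hsum (abs_nonneg _)
              (abs_nonneg _)
        _ = (2*M + QB)/εp * |x - y| := by ring
    · intro x _
      apply Continuous.continuousOn
      apply Continuous.neg
      apply Continuous.add
      apply Continuous.add
      · exact (continuous_const.pow 2).div hP (fun t => (hPpos t).ne')
      · exact (hQ.mul continuous_const).div hP (fun t => (hPpos t).ne')
      · exact hR
    · intro t ht x _
      rw [hCcoe, Real.norm_eq_abs, hF]
      have hPt := hPpos t
      calc |(-((rcl M x) ^ 2 / P t + Q t * rcl M x / P t + R₀ t))|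
          ≤ |(rcl M x) ^ 2 / P t| + |Q t * rcl M x / P t| + |R₀ t| := by
            rw [abs_neg]; exact abs_add_three _ _ _
        _ ≤ M^2/εp + QB*M/εp + RB := by
            have h1 : |(rcl M x) ^ 2 / P t| ≤ M^2/εp := by
              rw [abs_div, abs_of_pos hPt, abs_pow]
              apply div_le_div₀ (by positivity) ?_ hεppos (hεple t ht)
              exact pow_le_pow_left₀ (abs_nonneg _) (abs_rcl_le hMpos.le x) 2
            have h2 : |Q t * rcl M x / P t| ≤ QB*M/εp := by
              rw [abs_div, abs_of_pos hPt, abs_mul]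
              apply div_le_div₀ (by positivity) ?_ hεppos (hεple t ht)
              exact mul_le_mul (hQBle t ht) (abs_rcl_le hMpos.le x)
                (abs_nonneg _) hQBnn
            have h3 := hRBle t ht
            linarith
        _ = C := by rw [hC]; ring
    · simp only [NNReal.coe_zero, sub_zero, hCcoe, hRcoe]
      rw [hR']
      apply mul_le_mul_of_nonneg_left _ hCnn
      show max (b - t₀) (t₀ - a) ≤ b - a
      rw [ha]
      apply max_le <;> linarith
  obtain ⟨α, hα0, hαd⟩ := hpl.exists_eq_forall_mem_Icc_hasDerivWithinAt₀
  replace hα0 : α t₀ = γ t₀ := hα0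
  have hsubab : Icc t₀ b ⊆ Icc a b := Icc_subset_Icc (by rw [ha]; linarith) le_rfl
  have hαc : ContinuousOn α (Icc a b) := fun t ht => (hαd t ht).continuousWithinAt
  have hαd' : ∀ t ∈ Ioo a b, HasDerivAt α (F t (α t)) t := fun t ht =>
    (hαd t (Ioo_subset_Icc_self ht)).hasDerivAt (Icc_mem_nhds ht.1 ht.2)
  have hIcoIoo : Ico t₀ b ⊆ Ioo a b := fun t ht =>
    ⟨by rw [ha]; linarith [ht.1], ht.2⟩
  -- upper bound
  have hub : ∀ t ∈ Icc t₀ b, α t ≤ γ t₀ + I t := by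
    have hg : AntitoneOn (fun t => α t - (γ t₀ + I t)) (Icc t₀ b) := by
      apply antitoneOn_of_deriv_nonpos (convex_Icc _ _)
      · exact ContinuousOn.sub (hαc.mono hsubab)
          (continuous_const.add hIc).continuousOn
      · intro x hx
        rw [interior_Icc] at hx
        exact (((hαd' x (hIcoIoo ⟨hx.1.le, hx.2⟩)).sub
          ((hId x).const_add (γ t₀))).differentiableAt).differentiableWithinAt
      · intro x hx
        rw [interior_Icc] at hx
        have hd : HasDerivAt (fun t => α t - (γ t₀ + I t)) (F x (α x) - m x) x :=
          (hαd' x (hIcoIoo ⟨hx.1.le, hx.2⟩)).sub ((hId x).const_add (γ t₀))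
        rw [hd.deriv]
        have hPx := (hPpos x).ne'
        have key : F x (α x) - m x = -((rcl M (α x) + Q x / 2)^2 / P x) := by
          simp only [hF, hm]
          field_simp
          ring
        rw [key, neg_nonpos]
        have := hPpos x
        positivity
    intro t ht
    have h1 : α t - (γ t₀ + I t) ≤ α t₀ - (γ t₀ + I t₀) :=
      hg (left_mem_Icc.2 (ht.1.trans ht.2)) ht ht.1
    rw [hα0, hIt₀] at h1
    linarith
  -- upper bound in terms of M
  have hαleM : ∀ t ∈ Icc t₀ b, α t ≤ M - 3 := by
    intro t ht
    have h1 := hub t ht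
    have h2 := (abs_le.1 (hIBle t ht)).2
    rw [hM]
    linarith
  set K₀ : ℝ := (M + GB + QB)/εp with hK₀
  have hK₀nn : 0 ≤ K₀ := by positivity
  -- lower bound: comparison with γ
  have hlb : ∀ t ∈ Icc t₀ b, γ t ≤ α t := by
    by_contra hcon
    push_neg at hcon
    obtain ⟨t₁, ht₁, hlt⟩ := hcon
    set E : Set ℝ := Icc t₀ t₁ ∩ (fun t => α t - γ t) ⁻¹' Ici 0 with hE
    have hsub1 : Icc t₀ t₁ ⊆ Icc a b := Icc_subset_Icc (by rw [ha]; linarith) ht₁.2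
    have hsub1' : Icc t₀ t₁ ⊆ Icc t₀ b := Icc_subset_Icc le_rfl ht₁.2
    have hEclosed : IsClosed E :=
      ContinuousOn.preimage_isClosed_of_isClosed
        ((hαc.mono hsub1).sub (hγc.mono hsub1')) isClosed_Icc isClosed_Ici
    have ht₀E : t₀ ∈ E := by
      refine ⟨left_mem_Icc.2 ht₁.1, ?_⟩
      simp [hα0]
    have hEne : E.Nonempty := ⟨t₀, ht₀E⟩
    have hEbdd : BddAbove E := ⟨t₁, fun x hx => hx.1.2⟩
    set t₂ : ℝ := sSup E with ht₂def
    have ht₂E : t₂ ∈ E := hEclosed.csSup_mem hEne hEbdd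
    have ht₂mem : t₂ ∈ Icc t₀ t₁ := ht₂E.1
    have hα₂ : γ t₂ ≤ α t₂ := by
      have := ht₂E.2
      simp only [mem_preimage, mem_Ici] at this
      linarith
    have ht₂lt : t₂ < t₁ := by
      rcases lt_or_eq_of_le ht₂mem.2 with h | h
      · exact h
      · exfalso; rw [h] at hα₂; linarith
    have h2 : ∀ s, t₂ < s → s ≤ t₁ → α s < γ s := by
      intro s hs hs'
      by_contra hge
      push_neg at hge
      have hsE : s ∈ E := ⟨⟨ht₂mem.1.trans hs.le, hs'⟩, by
        simp only [mem_preimage, mem_Ici]; linarith⟩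
      exact absurd (le_csSup hEbdd hsE) (not_le.2 hs)
    -- t₃ : first time in [t₂, t₁] where α reaches 1 - M, or t₁
    set E₂ : Set ℝ := (Icc t₂ t₁ ∩ α ⁻¹' Iic (1 - M)) ∪ {t₁} with hE₂
    have hsub2 : Icc t₂ t₁ ⊆ Icc a b := Icc_subset_Icc
      (by rw [ha]; linarith [ht₂mem.1]) ht₁.2
    have hsub2' : Icc t₂ t₁ ⊆ Icc t₀ b := Icc_subset_Icc ht₂mem.1 ht₁.2
    have hE₂closed : IsClosed E₂ :=
      (ContinuousOn.preimage_isClosed_of_isClosed (hαc.mono hsub2)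
        isClosed_Icc isClosed_Iic).union isClosed_singleton
    have hE₂ne : E₂.Nonempty := ⟨t₁, Or.inr rfl⟩
    have hE₂bdd : BddBelow E₂ := ⟨t₂, by
      rintro x (hx | hx)
      · exact hx.1.1
      · rw [mem_singleton_iff] at hx; rw [hx]; exact ht₂lt.le⟩
    set t₃ : ℝ := sInf E₂ with ht₃def
    have ht₃E₂ : t₃ ∈ E₂ := hE₂closed.csInf_mem hE₂ne hE₂bdd
    have ht₃le : t₃ ≤ t₁ := csInf_le hE₂bdd (Or.inr rfl)
    have ht₂₃ : t₂ < t₃ := by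
      rcases lt_or_eq_of_le (le_csInf hE₂ne (fun x hx => by
        rcases hx with hx | hx
        · exact hx.1.1
        · rw [mem_singleton_iff] at hx; rw [hx]; exact ht₂lt.le)) with h | h
      · exact h
      · exfalso
        rw [← ht₃def] at h
        rw [← h] at ht₃E₂
        rcases ht₃E₂ with hx | hx
        · have h5 : α t₂ ≤ 1 - M := hx.2
          have h6 : |γ t₂| ≤ GB := hGBle t₂ (hsub1' ht₂mem)
          have h7 := (abs_le.1 h6).1
          rw [hM] at h5
          linarith
        · rw [mem_singleton_iff] at hx; exact absurd hx ht₂lt.ne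
    have h3 : ∀ s, t₂ < s → s < t₃ → 1 - M < α s := by
      intro s hs hs'
      by_contra hle
      push_neg at hle
      have : s ∈ E₂ := Or.inl ⟨⟨hs.le, hs'.le.trans ht₃le⟩, hle⟩
      exact absurd (csInf_le hE₂bdd this) (not_le.2 hs')
    -- the exponentially weighted difference is antitone on [t₂, t₃]
    have hmono : AntitoneOn (fun s => (γ s - α s) * Real.exp (-(K₀ * s)))
        (Icc t₂ t₃) := by
      have hsub3 : Icc t₂ t₃ ⊆ Icc a b := Icc_subset_Icc
        (by rw [ha]; linarith [ht₂mem.1]) (ht₃le.trans ht₁.2)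
      have hsub3' : Icc t₂ t₃ ⊆ Icc t₀ b := Icc_subset_Icc ht₂mem.1
        (ht₃le.trans ht₁.2)
      have hderiv : ∀ s ∈ Ioo t₂ t₃,
          HasDerivAt (fun u => (γ u - α u) * Real.exp (-(K₀ * u)))
            ((γ' s - F s (α s)) * Real.exp (-(K₀ * s)) +
              (γ s - α s) * (Real.exp (-(K₀ * s)) * -K₀)) s := by
        intro s hs
        have hsmem : s ∈ Icc t₀ b := hsub3' ⟨hs.1.le, hs.2.le⟩
        have hw : HasDerivAt (fun u => γ u - α u) (γ' s - F s (α s)) s :=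
          (hγ s hsmem.1).sub (hαd' s ⟨by rw [ha]; linarith [hsmem.1],
            lt_of_lt_of_le hs.2 (ht₃le.trans ht₁.2)⟩)
        have hin : HasDerivAt (fun u : ℝ => -(K₀ * u)) (-K₀) s := by
          exact ((hasDerivAt_id s).const_mul K₀).neg.congr_deriv (by ring)
        exact hw.mul hin.exp
      apply antitoneOn_of_deriv_nonpos (convex_Icc _ _)
      · exact ((hγc.mono hsub3').sub (hαc.mono hsub3)).mul
          (Real.continuous_exp.comp (continuous_const.mul continuous_id).neg).continuousOn
      · intro s hs
        rw [interior_Icc] at hs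
        exact (hderiv s hs).differentiableAt.differentiableWithinAt
      · intro s hs
        rw [interior_Icc] at hs
        rw [(hderiv s hs).deriv]
        have hsmem : s ∈ Icc t₀ b := hsub3' ⟨hs.1.le, hs.2.le⟩
        have hsab : s ∈ Icc a b := hsub3 ⟨hs.1.le, hs.2.le⟩
        have he : (0:ℝ) < Real.exp (-(K₀ * s)) := Real.exp_pos _
        have hwpos : 0 ≤ γ s - α s := by
          have := h2 s hs.1 (hs.2.le.trans ht₃le)
          linarith
        -- clamp is inactive at s
        have hαs_ub : α s ≤ M - 3 := hαleM s hsmem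
        have hαs_lb : 1 - M < α s := h3 s hs.1 hs.2
        have hcl : rcl M (α s) = α s := rcl_eq (by linarith) (by linarith)
        have hFeq : F s (α s) = -(α s ^ 2 / P s + Q s * α s / P s + R₀ s) := by
          simp only [hF, hcl]
        -- the key differential inequality
        have hPs := hPpos s
        have hγs := hsub s hsmem
        have hAbound : |α s + γ s + Q s| ≤ M + GB + QB := by
          have h6 := abs_le.1 (hGBle s hsmem)
          have h7 := abs_le.1 (hQBle s hsab)
          rw [abs_le]
          refine ⟨by linarith [h6.1, h7.1], by linarith [h6.2, h7.2]⟩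
        have hKb : -(α s + γ s + Q s) / P s ≤ K₀ := by
          rw [hK₀]
          apply div_le_div₀ (by positivity) ?_ hεppos (hεple s hsab)
          calc -(α s + γ s + Q s) ≤ |α s + γ s + Q s| := neg_le_abs _
            _ ≤ M + GB + QB := hAbound
        have keyeq : -(γ s ^ 2 / P s + Q s * γ s / P s + R₀ s) +
            (α s ^ 2 / P s + Q s * α s / P s + R₀ s)
            = (γ s - α s) * (-(α s + γ s + Q s) / P s) := by
          field_simp
          ring
        have h4 : γ' s - F s (α s) ≤ K₀ * (γ s - α s) := by
          rw [hFeq]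
          have step1 : γ' s - -(α s ^ 2 / P s + Q s * α s / P s + R₀ s)
              ≤ (γ s - α s) * (-(α s + γ s + Q s) / P s) := by
            rw [← keyeq]
            linarith
          calc γ' s - -(α s ^ 2 / P s + Q s * α s / P s + R₀ s)
              ≤ (γ s - α s) * (-(α s + γ s + Q s) / P s) := step1
            _ ≤ (γ s - α s) * K₀ := mul_le_mul_of_nonneg_left hKb hwpos
            _ = K₀ * (γ s - α s) := by ring
        have h4e := mul_le_mul_of_nonneg_right h4 he.le
        have heq2 : (γ s - α s) * (Real.exp (-(K₀ * s)) * -K₀)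
            = -(K₀ * (γ s - α s) * Real.exp (-(K₀ * s))) := by ring
        have heq3 : K₀ * (γ s - α s) * Real.exp (-(K₀ * s))
            = K₀ * (γ s - α s) * Real.exp (-(K₀ * s)) := rfl
        linarith [h4e, heq2.le, heq2.ge]
    -- conclude the contradiction
    have hα₃lt : α t₃ < γ t₃ := h2 t₃ ht₂₃ ht₃le
    have hmono' : (γ t₃ - α t₃) * Real.exp (-(K₀ * t₃))
        ≤ (γ t₂ - α t₂) * Real.exp (-(K₀ * t₂)) :=
      hmono (left_mem_Icc.2 ht₂₃.le) (right_mem_Icc.2 ht₂₃.le) ht₂₃.le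
    have he₂ : (0:ℝ) < Real.exp (-(K₀ * t₂)) := Real.exp_pos _
    have he₃ : (0:ℝ) < Real.exp (-(K₀ * t₃)) := Real.exp_pos _
    have hr1 : (γ t₂ - α t₂) * Real.exp (-(K₀ * t₂)) ≤ 0 :=
      mul_nonpos_iff.2 (Or.inr ⟨by linarith, he₂.le⟩)
    have hr2 : 0 < (γ t₃ - α t₃) * Real.exp (-(K₀ * t₃)) :=
      mul_pos (by linarith) he₃
    linarith [hmono', hr1, hr2]
  -- assemble
  refine ⟨α, hα0, ?_, fun t ht => ⟨hlb t ht, hub t ht⟩⟩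
  intro t ht
  have htmem : t ∈ Icc t₀ b := ⟨ht.1, ht.2.le⟩
  have h1 := hαd' t (hIcoIoo ht)
  have hγlb := (abs_le.1 (hGBle t htmem)).1
  have hαub := hαleM t htmem
  have hαlb := hlb t htmem
  have hγM : -M ≤ γ t := by rw [hM]; linarith
  have hcl : rcl M (α t) = α t := rcl_eq (hγM.trans hαlb) (by linarith)
  have hFeq : F t (α t) = -(α t ^ 2 / P t + Q t * α t / P t + R₀ t) := by
    simp only [hF, hcl]
  rwa [hFeq] at h1

lemma riccati_unique (P Q R₀ : ℝ → ℝ)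
    (hP : Continuous P) (hQ : Continuous Q) (hR : Continuous R₀)
    (hPpos : ∀ t, 0 < P t)
    (t₀ c : ℝ) (hc : t₀ < c) (M : ℝ) (hM : 0 ≤ M)
    (α β : ℝ → ℝ)
    (hαd : ∀ t ∈ Ico t₀ c,
      HasDerivAt α (-(α t ^ 2 / P t + Q t * α t / P t + R₀ t)) t)
    (hαc : ContinuousOn α (Icc t₀ c))
    (hαb : ∀ t ∈ Icc t₀ c, |α t| ≤ M)
    (hβd : ∀ t ∈ Ico t₀ c,
      HasDerivAt β (-(β t ^ 2 / P t + Q t * β t / P t + R₀ t)) t)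
    (hβc : ContinuousOn β (Icc t₀ c))
    (hβb : ∀ t ∈ Icc t₀ c, |β t| ≤ M)
    (h0 : α t₀ = β t₀) : EqOn α β (Icc t₀ c) := by
  set v : ℝ → ℝ → ℝ := fun t x => -(x ^ 2 / P t + Q t * x / P t + R₀ t) with hv
  set S : ℝ → Set ℝ := fun t => if t ∈ Icc t₀ c then Icc (-M) M else ∅ with hS
  have hcpt : IsCompact (Icc t₀ c) := isCompact_Icc
  obtain ⟨tp, htp, htpmin⟩ := hcpt.exists_isMinOn (nonempty_Icc.2 hc.le)
    hP.continuousOn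
  set εp : ℝ := P tp with hεp
  have hεppos : 0 < εp := hPpos tp
  obtain ⟨QB₀, hQB₀⟩ := hcpt.exists_bound_of_continuousOn hQ.continuousOn
  set QB : ℝ := max QB₀ 0 with hQB
  have hQBnn : 0 ≤ QB := le_max_right _ _
  set K : NNReal := Real.toNNReal ((2*M + QB)/εp) with hK
  have hKcoe : (K : ℝ) = (2*M + QB)/εp := Real.coe_toNNReal _ (by positivity)
  have hlip : ∀ t, LipschitzOnWith K (v t) (S t) := by
    intro t
    by_cases ht : t ∈ Icc t₀ c
    · rw [hS]
      simp only [if_pos ht]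
      rw [lipschitzOnWith_iff_dist_le_mul]
      intro x hx y hy
      rw [Real.dist_eq, Real.dist_eq, hKcoe]
      have hPt := hPpos t
      have key : v t x - v t y = -((x - y) * (x + y + Q t)) / P t := by
        rw [hv]; field_simp; ring
      rw [key, abs_div, abs_neg, abs_mul, abs_of_pos hPt]
      have hsum : |x + y + Q t| ≤ 2*M + QB := by
        have h1 : -M ≤ x ∧ x ≤ M := hx
        have h2 : -M ≤ y ∧ y ≤ M := hy
        have h3 := abs_le.1 ((hQB₀ t ht).trans (le_max_left QB₀ 0))
        rw [abs_le]
        exact ⟨by linarith [h1.1, h2.1, h3.1], by linarith [h1.2, h2.2, h3.2]⟩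
      calc |x - y| * |x + y + Q t| / P t
          ≤ |x - y| * (2*M + QB) / εp :=
            div_le_div₀ (by positivity)
              (mul_le_mul_of_nonneg_left hsum (abs_nonneg _))
              hεppos (htpmin ht)
        _ = (2*M + QB)/εp * |x - y| := by ring
    · rw [hS]
      simp only [if_neg ht]
      exact lipschitzOnWith_empty _ _
  have hmem : ∀ (f : ℝ → ℝ), (∀ t ∈ Icc t₀ c, |f t| ≤ M) →
      ∀ t ∈ Ico t₀ c, f t ∈ S t := by
    intro f hf t ht
    have htc : t ∈ Icc t₀ c := ⟨ht.1, ht.2.le⟩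
    rw [hS]
    simp only [if_pos htc]
    exact ⟨(abs_le.1 (hf t htc)).1, (abs_le.1 (hf t htc)).2⟩
  intro t ht
  refine ODE_solution_unique_of_mem_Icc_right (fun t _ => hlip t) hαc
    (fun s hs => ?_) (hmem α hαb) hβc (fun s hs => ?_) (hmem β hβb) h0 ht
  · exact (hαd s hs).hasDerivWithinAt
  · exact (hβd s hs).hasDerivWithinAt

theorem riccati_subsolution_global_existence
    (t₀ : ℝ) (p q r γ γ' : ℝ → ℝ)
    (hp : ContinuousOn p (Set.Ici t₀)) (hq : ContinuousOn q (Set.Ici t₀))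
    (hr : ContinuousOn r (Set.Ici t₀))
    (hppos : ∀ t ∈ Set.Ici t₀, 0 < p t)
    (hγ : ∀ t ∈ Set.Ici t₀, HasDerivAt γ (γ' t) t)
    (hγ' : ContinuousOn γ' (Set.Ici t₀))
    (hsub : ∀ t ∈ Set.Ici t₀,
      γ' t + γ t ^ 2 / p t + q t * γ t / p t + r t ≤ 0)
    (hrneg : ∀ t ∈ Set.Ici t₀, r t ≤ 0) :
    ∃ α : ℝ → ℝ, α t₀ = γ t₀ ∧
      (∀ t ∈ Set.Ici t₀,
        HasDerivAt α (-(α t ^ 2 / p t + q t * α t / p t + r t)) t) ∧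
      ∀ t ∈ Set.Ici t₀, γ t ≤ α t := by
  classical
  -- continuous extensions of the coefficients to all of ℝ
  have hmax : ∀ t : ℝ, max t t₀ ∈ Ici t₀ := fun t => mem_Ici.2 (le_max_right _ _)
  set P : ℝ → ℝ := fun t => p (max t t₀) with hPdef
  set Q : ℝ → ℝ := fun t => q (max t t₀) with hQdef
  set R₀ : ℝ → ℝ := fun t => r (max t t₀) with hRdef
  have hmaxc : Continuous fun t : ℝ => max t t₀ :=
    continuous_id.max continuous_const
  have hPc : Continuous P := hp.comp_continuous hmaxc hmax
  have hQc : Continuous Q := hq.comp_continuous hmaxc hmax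
  have hRc : Continuous R₀ := hr.comp_continuous hmaxc hmax
  have hPpos' : ∀ t, 0 < P t := fun t => hppos _ (hmax t)
  have hPeq : ∀ t ∈ Ici t₀, P t = p t := fun t ht => by
    rw [hPdef]; simp only; rw [max_eq_left ht]
  have hQeq : ∀ t ∈ Ici t₀, Q t = q t := fun t ht => by
    rw [hQdef]; simp only; rw [max_eq_left ht]
  have hReq : ∀ t ∈ Ici t₀, R₀ t = r t := fun t ht => by
    rw [hRdef]; simp only; rw [max_eq_left ht]
  -- the subsolution inequality for extended coefficients
  have hsub' : ∀ t ∈ Ici t₀,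
      γ' t + γ t ^ 2 / P t + Q t * γ t / P t + R₀ t ≤ 0 := by
    intro t ht
    rw [hPeq t ht, hQeq t ht, hReq t ht]
    exact hsub t ht
  -- solutions on each interval [t₀, t₀ + n + 1]
  have hex : ∀ n : ℕ, ∃ α : ℝ → ℝ, α t₀ = γ t₀ ∧
      (∀ t ∈ Ico t₀ (t₀ + n + 1),
        HasDerivAt α (-(α t ^ 2 / P t + Q t * α t / P t + R₀ t)) t) ∧
      ∀ t ∈ Icc t₀ (t₀ + n + 1), γ t ≤ α t ∧
        α t ≤ γ t₀ + ∫ s in t₀..t, (Q s ^ 2 / (4 * P s) - R₀ s) := by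
    intro n
    apply riccati_exists_on P Q R₀ γ γ' hPc hQc hRc hPpos' t₀ (t₀ + n + 1)
      (by linarith [show (0:ℝ) ≤ (n:ℝ) from Nat.cast_nonneg n]) hγ
    intro t ht
    exact hsub' t ht.1
  choose A hA0 hAd hAb using hex
  -- the upper barrier
  set J : ℝ → ℝ := fun t => γ t₀ + ∫ s in t₀..t, (Q s ^ 2 / (4 * P s) - R₀ s)
    with hJdef
  have hmc : Continuous fun s => Q s ^ 2 / (4 * P s) - R₀ s := by
    apply Continuous.sub _ hRc
    exact (hQc.pow 2).div (continuous_const.mul hPc)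
      (fun t => by have := hPpos' t; positivity)
  have hJc : Continuous J := by
    apply continuous_const.add
    apply continuous_iff_continuousAt.2
    intro x
    exact (intervalIntegral.integral_hasDerivAt_right
      (hmc.intervalIntegrable _ _) (hmc.stronglyMeasurableAtFilter _ _)
      hmc.continuousAt).continuousAt
  have hγcont : ContinuousOn γ (Ici t₀) := fun s hs =>
    (hγ s hs).continuousAt.continuousWithinAt
  -- consistency of the family of solutions
  have agree : ∀ (n k : ℕ) (t : ℝ), t₀ ≤ t → t < t₀ + n + 1 → t < t₀ + k + 1 →
      A n t = A k t := by
    intro n k t ht htn htk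
    rcases eq_or_lt_of_le ht with h | h
    · rw [← h, hA0, hA0]
    · -- bounds on [t₀, t]
      obtain ⟨G1, hG1⟩ := isCompact_Icc.exists_bound_of_continuousOn
        (hγcont.mono (Icc_subset_Ici_self : Icc t₀ t ⊆ Ici t₀))
      obtain ⟨G2, hG2⟩ := isCompact_Icc.exists_bound_of_continuousOn
        (hJc.continuousOn : ContinuousOn J (Icc t₀ t))
      have hG1nn : 0 ≤ G1 := (abs_nonneg _).trans
        (hG1 t₀ (left_mem_Icc.2 h.le))
      have hG2nn : 0 ≤ G2 := (abs_nonneg _).trans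
        (hG2 t₀ (left_mem_Icc.2 h.le))
      have hbound : ∀ (j : ℕ), t < t₀ + j + 1 →
          ∀ s ∈ Icc t₀ t, |A j s| ≤ G1 + G2 := by
        intro j hj s hs
        have hs' : s ∈ Icc t₀ (t₀ + j + 1) := ⟨hs.1, by linarith [hs.2]⟩
        have h1 := (hAb j s hs').1
        have h2 := (hAb j s hs').2
        rw [abs_le]
        constructor
        · have := neg_abs_le (γ s)
          have := hG1 s hs
          calc -(G1 + G2) ≤ -|γ s| := by
                have := hG1 s hs; rw [Real.norm_eq_abs] at this; linarith
            _ ≤ γ s := neg_abs_le _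
            _ ≤ A j s := h1
        · have h3 := hG2 s hs
          rw [Real.norm_eq_abs] at h3
          calc A j s ≤ J s := h2
            _ ≤ |J s| := le_abs_self _
            _ ≤ G1 + G2 := by linarith
      have hder : ∀ (j : ℕ), t < t₀ + j + 1 → ∀ s ∈ Ico t₀ t,
          HasDerivAt (A j) (-(A j s ^ 2 / P s + Q s * A j s / P s + R₀ s)) s :=
        fun j hj s hs => hAd j s ⟨hs.1, by linarith [hs.2]⟩
      have hcont : ∀ (j : ℕ), t < t₀ + j + 1 → ContinuousOn (A j) (Icc t₀ t) :=
        fun j hj s hs => ((hAd j s ⟨hs.1, by linarith [hs.2]⟩).continuousAt).continuousWithinAt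
      exact riccati_unique P Q R₀ hPc hQc hRc hPpos' t₀ t h (G1 + G2)
        (by linarith) (A n) (A k) (hder n htn) (hcont n htn) (hbound n htn)
        (hder k htk) (hcont k htk) (hbound k htk)
        (by rw [hA0, hA0]) (right_mem_Icc.2 h.le)
  -- the glued solution
  set nm : ℝ → ℕ := fun t => (⌊t - t₀⌋).toNat with hnm
  have hnm0 : ∀ τ, τ ≤ t₀ → nm τ = 0 := by
    intro τ h
    rw [hnm]
    simp only
    rw [Int.toNat_eq_zero]
    exact Int.floor_nonpos (by linarith)
  have hnmlt : ∀ τ, t₀ ≤ τ → τ < t₀ + nm τ + 1 := by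
    intro τ h
    have h3 : ((nm τ : ℕ) : ℝ) = ((⌊τ - t₀⌋ : ℤ) : ℝ) := by
      rw [hnm]
      norm_cast
      exact Int.toNat_of_nonneg (Int.floor_nonneg.2 (by linarith))
    have h2 := Int.lt_floor_add_one (τ - t₀)
    linarith [h3.le, h3.ge]
  set α : ℝ → ℝ := fun t => A (nm t) t with hα
  have agree' : ∀ t, t₀ ≤ t → ∀ k : ℕ, t < t₀ + k + 1 → α t = A k t := by
    intro t ht k hk
    rw [hα]
    simp only
    exact agree (nm t) k t ht (hnmlt t ht) hk
  refine ⟨α, ?_, ?_, ?_⟩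
  · have h0 : α t₀ = A (nm t₀) t₀ := rfl
    rw [h0, hA0]
  · intro t ht
    rw [mem_Ici] at ht
    have e1 : P t = p t := hPeq t ht
    have e2 : Q t = q t := hQeq t ht
    have e3 : R₀ t = r t := hReq t ht
    rcases eq_or_lt_of_le ht with heq | hlt
    · -- t = t₀
      subst heq
      have hev : α =ᶠ[nhds t₀] A 0 := by
        filter_upwards [Ioo_mem_nhds (by linarith : t₀ - 1 < t₀)
          (by linarith : t₀ < t₀ + 1)] with τ hτ
        rcases le_or_gt t₀ τ with h | h
        · exact agree' τ h 0 (by push_cast; linarith [hτ.2])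
        · rw [hα]; simp only; rw [hnm0 τ h.le]
      have hd := hAd 0 t₀ ⟨le_rfl, by push_cast; linarith⟩
      rw [hev.hasDerivAt_iff]
      have hval : α t₀ = A 0 t₀ := agree' t₀ le_rfl 0 (by push_cast; linarith)
      rw [hval, ← e1, ← e2, ← e3]
      exact hd
    · -- t₀ < t
      have hk := hnmlt t ht
      have hev : α =ᶠ[nhds t] A (nm t) := by
        filter_upwards [Ioo_mem_nhds hlt hk] with τ hτ
        exact agree' τ hτ.1.le (nm t) hτ.2
      have hd := hAd (nm t) t ⟨ht, hk⟩
      rw [hev.hasDerivAt_iff]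
      have hval : α t = A (nm t) t := rfl
      rw [hval, ← e1, ← e2, ← e3]
      exact hd
  · intro t ht
    rw [mem_Ici] at ht
    have hk := hnmlt t ht
    have := (hAb (nm t) t ⟨ht, hk.le⟩).1
    rw [hα]
    simpa using this
end

section
/- Let p, q be continuous on [t₀,∞) with p > 0, and suppose ∫_{t₀}^∞ exp(-∫_{t₀}^τ q(s)/p(s) ds)/p(τ) dτ = ∞. Let α₀ > 0 and let α̃ be the explicit positive solution of α' + α²/p + qα/p = 0 with α̃(t₀) = α₀. Then ∫_{t₀}^∞ α̃(τ)/p(τ) dτ = ∞. -/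
open MeasureTheory Set Filter

/-- The primitive of a function continuous on `Ici a` is continuous on `Ici a`. -/
lemma primitive_continuousOn_Ici {a : ℝ} {f : ℝ → ℝ} (hf : ContinuousOn f (Set.Ici a)) :
    ContinuousOn (fun x => ∫ t in a..x, f t) (Set.Ici a) := by
  intro x hx
  have hsub : Set.Icc a (x + 1) ⊆ Set.Ici a := Set.Icc_subset_Ici_self
  have hax : a ≤ x + 1 := by linarith [hx.out]
  have hint : IntegrableOn f (Set.uIcc a (x + 1)) volume := by
    rw [Set.uIcc_of_le hax]
    exact (hf.mono hsub).integrableOn_compact isCompact_Icc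
  have hcont : ContinuousOn (fun x => ∫ t in a..x, f t) (Set.Icc a (x + 1)) := by
    have := intervalIntegral.continuousOn_primitive_interval hint
    rwa [Set.uIcc_of_le hax] at this
  have hmem : Set.Icc a (x + 1) ∈ nhdsWithin x (Set.Ici a) := by
    rw [show Set.Icc a (x + 1) = Set.Ici a ∩ Set.Iic (x + 1) from rfl]
    exact Filter.inter_mem self_mem_nhdsWithin
      (mem_nhdsWithin_of_mem_nhds (Iic_mem_nhds (by linarith [hx.out])))
  exact (hcont.continuousWithinAt ⟨hx.out, by linarith [hx.out]⟩).mono_of_mem_nhdsWithin hmem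

theorem explicit_solution_integral_divergence
    (t₀ : ℝ) (p q : ℝ → ℝ) (α₀ : ℝ)
    (hp : ContinuousOn p (Set.Ici t₀)) (hq : ContinuousOn q (Set.Ici t₀))
    (hppos : ∀ t ∈ Set.Ici t₀, 0 < p t) (hα₀ : 0 < α₀)
    (hdiv : Filter.Tendsto
      (fun t => ∫ τ in t₀..t, Real.exp (-∫ s in t₀..τ, q s / p s) / p τ)
      Filter.atTop Filter.atTop) :
    let αt : ℝ → ℝ := fun t =>
      α₀ * Real.exp (-∫ ζ in t₀..t, q ζ / p ζ) /
        (1 + α₀ * ∫ ξ in t₀..t, Real.exp (-∫ ζ in t₀..ξ, q ζ / p ζ) / p ξ)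
    Filter.Tendsto (fun t => ∫ τ in t₀..t, αt τ / p τ)
      Filter.atTop Filter.atTop := by
  intro αt
  set G : ℝ → ℝ := fun t => ∫ s in t₀..t, q s / p s with hGdef
  set g : ℝ → ℝ := fun t => Real.exp (-G t) / p t with hgdef
  set E : ℝ → ℝ := fun t => ∫ ξ in t₀..t, g ξ with hEdef
  have hpne : ∀ t ∈ Set.Ici t₀, p t ≠ 0 := fun t ht => (hppos t ht).ne'
  have hqp : ContinuousOn (fun s => q s / p s) (Set.Ici t₀) := hq.div hp hpne
  have hG : ContinuousOn G (Set.Ici t₀) := primitive_continuousOn_Ici hqp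
  have hg : ContinuousOn g (Set.Ici t₀) := (hG.neg.rexp).div hp hpne
  have hE : ContinuousOn E (Set.Ici t₀) := primitive_continuousOn_Ici hg
  have hgpos : ∀ t ∈ Set.Ici t₀, 0 < g t := fun t ht =>
    div_pos (Real.exp_pos _) (hppos t ht)
  have hEnn : ∀ t ∈ Set.Ici t₀, 0 ≤ E t := by
    intro t ht
    exact intervalIntegral.integral_nonneg ht.out
      (fun u hu => (hgpos u (Set.mem_of_mem_of_subset hu Set.Icc_subset_Ici_self)).le)
  have hden : ∀ t ∈ Set.Ici t₀, 0 < 1 + α₀ * E t := fun t ht => by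
    have := hEnn t ht
    nlinarith
  have hdenne : ∀ t ∈ Set.Ici t₀, (1 : ℝ) + α₀ * E t ≠ 0 := fun t ht => (hden t ht).ne'
  -- continuity of αt / p on Ici t₀
  have hαtp : ContinuousOn (fun τ => αt τ / p τ) (Set.Ici t₀) := by
    apply ContinuousOn.div _ hp hpne
    exact ((continuousOn_const.mul hG.neg.rexp).div
      (continuousOn_const.add (continuousOn_const.mul hE)) hdenne)
  -- the key identity
  have key : ∀ t, t₀ ≤ t →
      (∫ τ in t₀..t, αt τ / p τ) = Real.log (1 + α₀ * E t) := by
    intro t ht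
    have hsub : Set.Icc t₀ t ⊆ Set.Ici t₀ := Set.Icc_subset_Ici_self
    have hcontf : ContinuousOn (fun u => Real.log (1 + α₀ * E u)) (Set.Icc t₀ t) := by
      apply ContinuousOn.log
      · exact continuousOn_const.add (continuousOn_const.mul (hE.mono hsub))
      · exact fun x hx => hdenne x (hsub hx)
    have hderiv : ∀ x ∈ Set.Ioo t₀ t,
        HasDerivWithinAt (fun u => Real.log (1 + α₀ * E u)) (αt x / p x) (Set.Ioi x) x := by
      intro x hx
      have hxIci : x ∈ Set.Ici t₀ := le_of_lt hx.1
      have hnhds : Set.Ioi t₀ ∈ nhds x := Ioi_mem_nhds hx.1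
      have hgx : ContinuousAt g x :=
        hg.continuousAt (Filter.mem_of_superset hnhds Set.Ioi_subset_Ici_self)
      have hgint : IntervalIntegrable g volume t₀ x := by
        apply ContinuousOn.intervalIntegrable
        apply hg.mono
        rw [Set.uIcc_of_le hx.1.le]
        exact Set.Icc_subset_Ici_self
      have hmeas : StronglyMeasurableAtFilter g (nhds x) volume := by
        refine ⟨Set.Ioi t₀, hnhds, ?_⟩
        exact (hg.mono Set.Ioi_subset_Ici_self).aestronglyMeasurable measurableSet_Ioi
      have hE' : HasDerivAt E (g x) x :=
        intervalIntegral.integral_hasDerivAt_right hgint hmeas hgx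
      have hden' : HasDerivAt (fun u => 1 + α₀ * E u) (α₀ * g x) x :=
        ((hE'.const_mul α₀).const_add 1)
      have hlog : HasDerivAt (fun u => Real.log (1 + α₀ * E u))
          (α₀ * g x / (1 + α₀ * E x)) x := hden'.log (hdenne x hxIci)
      have heq : α₀ * g x / (1 + α₀ * E x) = αt x / p x := by
        simp only [hgdef, αt]
        field_simp
        ring
      rw [heq] at hlog
      exact hlog.hasDerivWithinAt
    have hint : IntervalIntegrable (fun τ => αt τ / p τ) volume t₀ t := by
      apply ContinuousOn.intervalIntegrable
      apply hαtp.mono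
      rw [Set.uIcc_of_le ht]
      exact Set.Icc_subset_Ici_self
    have := intervalIntegral.integral_eq_sub_of_hasDeriv_right_of_le ht hcontf hderiv hint
    rw [this]
    have hE0 : E t₀ = 0 := intervalIntegral.integral_same
    rw [hE0]
    norm_num
  -- conclude
  have htend : Filter.Tendsto (fun t => Real.log (1 + α₀ * E t)) Filter.atTop Filter.atTop := by
    apply Real.tendsto_log_atTop.comp
    exact Filter.tendsto_atTop_add_const_left _ 1 (hdiv.const_mul_atTop hα₀)
  apply htend.congr'
  filter_upwards [Filter.eventually_ge_atTop t₀] with t ht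
  exact (key t ht).symm
end

section
/- Let p, q, r be continuous on [t₀,∞) with p > 0 and r(t) ≤ 0 for all t ≥ t₀, and let α be the solution of the Riccati equation α'(t) + α(t)²/p(t) + q(t)α(t)/p(t) + r(t) = 0 with initial condition α(t₀) = α₀ ≥ 0. Then α exists on all of [t₀,∞) and α(t) ≥ 0 for all t ≥ t₀; moreover α(t) ≥ α₁(t) where α₁ is the explicit solution of α' + α²/p + qα/p = 0 with α₁(t₀) = α₀. -/
open MeasureTheory Set Filter intervalIntegral

variable {E : Type*} [NormedAddCommGroup E] [NormedSpace ℝ E] [CompleteSpace E]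

/-- Picard iterates for the linear ODE `x' = A t x`. -/
noncomputable def picardIter (A : ℝ → E →L[ℝ] E) (t₀ : ℝ) (x₀ : E) : ℕ → ℝ → E
  | 0 => fun _ => x₀
  | n + 1 => fun t => ∫ s in t₀..t, A s (picardIter A t₀ x₀ n s)

theorem picardIter_continuous (A : ℝ → E →L[ℝ] E) (hA : Continuous A) (t₀ : ℝ) (x₀ : E) :
    ∀ n, Continuous (picardIter A t₀ x₀ n) := by
  intro n
  induction n with
  | zero => exact continuous_const
  | succ n ih =>
    exact intervalIntegral.continuous_primitive
      (fun a b => ((hA.clm_apply ih)).intervalIntegrable a b) t₀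

theorem picardIter_bound (A : ℝ → E →L[ℝ] E) (hA : Continuous A) (t₀ : ℝ) (x₀ : E)
    {a b : ℝ} (ha : a ≤ t₀) (hb : t₀ ≤ b) {M : ℝ} (hM : 0 ≤ M)
    (hbd : ∀ s ∈ Icc a b, ‖A s‖ ≤ M) :
    ∀ n, ∀ t ∈ Icc a b, ‖picardIter A t₀ x₀ n t‖ ≤ ‖x₀‖ * (M * |t - t₀|) ^ n / n.factorial := by
  intro n
  induction n with
  | zero => intro t ht; simp [picardIter]
  | succ n ih =>
    intro t ht
    have hint : ∀ (c d : ℝ), IntervalIntegrable (fun s => ‖A s (picardIter A t₀ x₀ n s)‖)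
        volume c d :=
      fun c d => ((hA.clm_apply (picardIter_continuous A hA t₀ x₀ n)).norm).intervalIntegrable c d
    have key : ∀ s ∈ Icc a b, ‖A s (picardIter A t₀ x₀ n s)‖ ≤
        ‖x₀‖ * M ^ (n + 1) * |s - t₀| ^ n / n.factorial := by
      intro s hs
      calc ‖A s (picardIter A t₀ x₀ n s)‖ ≤ ‖A s‖ * ‖picardIter A t₀ x₀ n s‖ :=
            (A s).le_opNorm _
        _ ≤ M * (‖x₀‖ * (M * |s - t₀|) ^ n / n.factorial) := by
            apply mul_le_mul (hbd s hs) (ih s hs) (norm_nonneg _) hM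
        _ = ‖x₀‖ * M ^ (n + 1) * |s - t₀| ^ n / n.factorial := by ring
    rcases le_total t₀ t with hct | hct
    · have h1 : ‖picardIter A t₀ x₀ (n + 1) t‖ ≤
          ∫ s in t₀..t, ‖A s (picardIter A t₀ x₀ n s)‖ :=
        intervalIntegral.norm_integral_le_integral_norm hct
      have h2 : (∫ s in t₀..t, ‖A s (picardIter A t₀ x₀ n s)‖) ≤
          ∫ s in t₀..t, ‖x₀‖ * M ^ (n + 1) * (s - t₀) ^ n / n.factorial := by
        apply intervalIntegral.integral_mono_on hct (hint t₀ t)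
        · exact (Continuous.intervalIntegrable (by fun_prop) t₀ t)
        · intro s hs
          have hs' : s ∈ Icc a b := ⟨ha.trans hs.1, hs.2.trans ht.2⟩
          have := key s hs'
          rwa [abs_of_nonneg (by linarith [hs.1])] at this
      have h3 : (∫ s in t₀..t, ‖x₀‖ * M ^ (n + 1) * (s - t₀) ^ n / n.factorial)
          = ‖x₀‖ * (M * |t - t₀|) ^ (n + 1) / (n + 1).factorial := by
        have : (∫ s in t₀..t, (s - t₀) ^ n) = (t - t₀) ^ (n + 1) / (n + 1) := by
          rw [show (fun s : ℝ => (s - t₀) ^ n) = fun s => (fun x : ℝ => x ^ n) (s - t₀) from rfl,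
            intervalIntegral.integral_comp_sub_right (fun x : ℝ => x ^ n) t₀]
          simp [integral_pow]
        rw [intervalIntegral.integral_div, intervalIntegral.integral_const_mul, this,
          abs_of_nonneg (by linarith), Nat.factorial_succ, mul_pow]
        field_simp
        push_cast
        ring
      calc ‖picardIter A t₀ x₀ (n + 1) t‖ ≤ _ := h1
        _ ≤ _ := h2
        _ = _ := h3
    · have h0 : picardIter A t₀ x₀ (n + 1) t = -∫ s in t..t₀, A s (picardIter A t₀ x₀ n s) := by
        rw [show picardIter A t₀ x₀ (n+1) t = ∫ s in t₀..t, A s (picardIter A t₀ x₀ n s) from rfl,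
          intervalIntegral.integral_symm]
      have h1 : ‖picardIter A t₀ x₀ (n + 1) t‖ ≤
          ∫ s in t..t₀, ‖A s (picardIter A t₀ x₀ n s)‖ := by
        rw [h0, norm_neg]
        exact intervalIntegral.norm_integral_le_integral_norm hct
      have h2 : (∫ s in t..t₀, ‖A s (picardIter A t₀ x₀ n s)‖) ≤
          ∫ s in t..t₀, ‖x₀‖ * M ^ (n + 1) * (t₀ - s) ^ n / n.factorial := by
        apply intervalIntegral.integral_mono_on hct (hint t t₀)
        · exact (Continuous.intervalIntegrable (by fun_prop) t t₀)
        · intro s hs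
          have hs' : s ∈ Icc a b := ⟨ht.1.trans hs.1, hs.2.trans hb⟩
          have := key s hs'
          rwa [abs_of_nonpos (by linarith [hs.2]), neg_sub] at this
      have h3 : (∫ s in t..t₀, ‖x₀‖ * M ^ (n + 1) * (t₀ - s) ^ n / n.factorial)
          = ‖x₀‖ * (M * |t - t₀|) ^ (n + 1) / (n + 1).factorial := by
        have : (∫ s in t..t₀, (t₀ - s) ^ n) = (t₀ - t) ^ (n + 1) / (n + 1) := by
          rw [show (fun s : ℝ => (t₀ - s) ^ n) = fun s => (fun x : ℝ => x ^ n) (t₀ - s) from rfl,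
            intervalIntegral.integral_comp_sub_left (fun x : ℝ => x ^ n) t₀]
          simp [integral_pow]
        rw [intervalIntegral.integral_div, intervalIntegral.integral_const_mul, this,
          abs_of_nonpos (by linarith), Nat.factorial_succ, mul_pow]
        field_simp
        push_cast
        ring
      calc ‖picardIter A t₀ x₀ (n + 1) t‖ ≤ _ := h1
        _ ≤ _ := h2
        _ = _ := h3

theorem linear_ode_global_existence (A : ℝ → E →L[ℝ] E) (hA : Continuous A) (t₀ : ℝ) (x₀ : E) :
    ∃ x : ℝ → E, x t₀ = x₀ ∧ Continuous x ∧ ∀ t, HasDerivAt x (A t (x t)) t := by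
  set iter := picardIter A t₀ x₀ with hiter
  have icont := picardIter_continuous A hA t₀ x₀
  -- summability and uniform bounds on each symmetric interval
  have hMex : ∀ a b : ℝ, a ≤ t₀ → t₀ ≤ b → ∃ M : ℝ, 0 ≤ M ∧ ∀ s ∈ Icc a b, ‖A s‖ ≤ M := by
    intro a b ha hb
    obtain ⟨C, hC⟩ := isCompact_Icc.exists_bound_of_continuousOn (hA.continuousOn (s := Icc a b))
    exact ⟨max C 0, le_max_right _ _, fun s hs => (hC s hs).trans (le_max_left _ _)⟩
  have hsummable : ∀ t : ℝ, Summable fun n => iter n t := by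
    intro t
    obtain ⟨M, hM0, hM⟩ := hMex (min t t₀) (max t t₀) (min_le_right _ _) (le_max_right _ _)
    apply Summable.of_norm_bounded (g := fun n => ‖x₀‖ * (M * |t - t₀|) ^ n / n.factorial)
    · simpa [mul_div_assoc] using (Real.summable_pow_div_factorial (M * |t - t₀|)).mul_left ‖x₀‖
    · intro n
      exact picardIter_bound A hA t₀ x₀ (min_le_right _ _) (le_max_right _ _) hM0 hM n t
        ⟨min_le_left _ _, le_max_left _ _⟩
  set x : ℝ → E := fun t => ∑' n, iter n t with hx
  -- continuity of x
  have hxcont : Continuous x := by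
    rw [continuous_iff_continuousAt]
    intro t
    obtain ⟨M, hM0, hM⟩ := hMex (min (t-1) t₀) (max (t+1) t₀) (min_le_right _ _) (le_max_right _ _)
    set D : ℝ := max (|max (t+1) t₀ - t₀|) (|min (t-1) t₀ - t₀|) with hD
    have hTU : TendstoUniformlyOn (fun N s => ∑ n ∈ Finset.range N, iter n s) x atTop
        (Icc (min (t-1) t₀) (max (t+1) t₀)) := by
      apply tendstoUniformlyOn_tsum_nat
        (u := fun n => ‖x₀‖ * (M * D) ^ n / n.factorial)
      · simpa [mul_div_assoc] using (Real.summable_pow_div_factorial (M * D)).mul_left ‖x₀‖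
      · intro n s hs
        refine (picardIter_bound A hA t₀ x₀ (min_le_right _ _) (le_max_right _ _) hM0 hM n s
          hs).trans ?_
        have hDnn : (0:ℝ) ≤ D := (abs_nonneg _).trans (le_max_left _ _)
        have : |s - t₀| ≤ D := by
          rw [abs_sub_le_iff]
          constructor
          · have h1 : s - t₀ ≤ max (t+1) t₀ - t₀ := by have := hs.2; linarith
            calc s - t₀ ≤ max (t+1) t₀ - t₀ := h1
              _ ≤ |max (t+1) t₀ - t₀| := le_abs_self _
              _ ≤ D := le_max_left _ _
          · have h1 : t₀ - s ≤ t₀ - min (t-1) t₀ := by have := hs.1; linarith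
            calc t₀ - s ≤ -(min (t-1) t₀ - t₀) := by linarith
              _ ≤ |min (t-1) t₀ - t₀| := neg_le_abs _
              _ ≤ D := le_max_right _ _
        have hpow : (M * |s - t₀|) ^ n ≤ (M * D) ^ n :=
          pow_le_pow_left₀ (mul_nonneg hM0 (abs_nonneg _))
            (mul_le_mul_of_nonneg_left this hM0) n
        exact (div_le_div_iff_of_pos_right (by positivity)).mpr
          (mul_le_mul_of_nonneg_left hpow (norm_nonneg _))
    have : ContinuousOn x (Icc (min (t-1) t₀) (max (t+1) t₀)) := by
      apply hTU.continuousOn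
      apply Filter.Eventually.frequently
      filter_upwards with N
      exact (continuousOn_finset_sum _ fun n _ => (icont n).continuousOn)
    refine this.continuousAt (Icc_mem_nhds ?_ ?_)
    · exact lt_of_le_of_lt (min_le_left _ _) (by linarith)
    · exact lt_of_lt_of_le (by linarith) (le_max_left _ _)
  -- the integral equation
  have hinteq : ∀ t : ℝ, x t = x₀ + ∫ s in t₀..t, A s (x s) := by
    intro t
    obtain ⟨M, hM0, hM⟩ := hMex (min t t₀) (max t t₀) (min_le_right _ _) (le_max_right _ _)
    set D : ℝ := |t - t₀| with hD
    have habs : ∀ s ∈ Icc (min t t₀) (max t t₀), |s - t₀| ≤ D := by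
      intro s hs
      rw [abs_sub_le_iff]
      rcases le_total t t₀ with h | h
      · constructor
        · have := hs.1; have := hs.2
          have : s ≤ t₀ := by simpa [max_eq_right h] using hs.2
          calc s - t₀ ≤ 0 := by linarith
            _ ≤ D := abs_nonneg _
        · have h1 : min t t₀ = t := min_eq_left h
          have := hs.1
          calc t₀ - s ≤ t₀ - t := by rw [h1] at this; linarith
            _ ≤ |t - t₀| := by rw [abs_sub_comm]; exact le_abs_self _
      · constructor
        · have : s ≤ t := by simpa [max_eq_left h] using hs.2
          calc s - t₀ ≤ t - t₀ := by linarith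
            _ ≤ D := le_abs_self _
        · have : t₀ ≤ s := by simpa [min_eq_right h] using hs.1
          calc t₀ - s ≤ 0 := by linarith
            _ ≤ D := abs_nonneg _
    have hbound : ∀ n, ∀ s ∈ Icc (min t t₀) (max t t₀),
        ‖iter n s‖ ≤ ‖x₀‖ * (M * D) ^ n / n.factorial := by
      intro n s hs
      refine (picardIter_bound A hA t₀ x₀ (min_le_right _ _) (le_max_right _ _) hM0 hM n s
        hs).trans ?_
      have hpow : (M * |s - t₀|) ^ n ≤ (M * D) ^ n :=
        pow_le_pow_left₀ (mul_nonneg hM0 (abs_nonneg _))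
          (mul_le_mul_of_nonneg_left (habs s hs) hM0) n
      exact (div_le_div_iff_of_pos_right (by positivity)).mpr
        (mul_le_mul_of_nonneg_left hpow (norm_nonneg _))
    set u : ℕ → ℝ := fun n => ‖x₀‖ * (M * D) ^ n / n.factorial with hu
    have hus : Summable u := by
      simpa [hu, mul_div_assoc] using (Real.summable_pow_div_factorial (M * D)).mul_left ‖x₀‖
    -- partial sums
    have hps : ∀ N : ℕ, (∫ s in t₀..t, A s (∑ n ∈ Finset.range N, iter n s))
        = (∑ n ∈ Finset.range N, iter (n+1) t) := by
      intro N
      have : ∀ s, A s (∑ n ∈ Finset.range N, iter n s)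
          = ∑ n ∈ Finset.range N, A s (iter n s) := by
        intro s; exact map_sum (A s) _ _
      rw [intervalIntegral.integral_congr (fun s _ => this s)]
      rw [intervalIntegral.integral_finset_sum
        (fun n _ => (hA.clm_apply (icont n)).intervalIntegrable t₀ t)]
      rfl
    -- limits
    have hlim1 : Tendsto (fun N => ∑ n ∈ Finset.range N, iter (n+1) t) atTop
        (nhds (x t - x₀)) := by
      have h0 : Tendsto (fun N => ∑ n ∈ Finset.range (N+1), iter n t) atTop (nhds (x t)) :=
        ((hsummable t).hasSum.tendsto_sum_nat).comp (tendsto_add_atTop_nat 1)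
      have heq : ∀ N, (∑ n ∈ Finset.range (N+1), iter n t) - x₀
          = ∑ n ∈ Finset.range N, iter (n+1) t := by
        intro N
        rw [Finset.sum_range_succ']
        simp [hiter, picardIter]
      have := h0.sub (tendsto_const_nhds (x := x₀))
      simpa [heq] using this
    have hlim2 : Tendsto (fun N => ∫ s in t₀..t, A s (∑ n ∈ Finset.range N, iter n s)) atTop
        (nhds (∫ s in t₀..t, A s (x s))) := by
      apply intervalIntegral.tendsto_integral_filter_of_dominated_convergence
        (bound := fun _ => M * (∑' n, u n))
      · filter_upwards with N
        exact (hA.clm_apply (continuous_finset_sum _ fun n _ => icont n)).aestronglyMeasurable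
      · filter_upwards with N
        filter_upwards with s hs
        have hs' : s ∈ Icc (min t t₀) (max t t₀) := Ioc_subset_Icc_self (by
          rcases le_total t₀ t with h | h
          · simpa [Set.uIoc_of_le h, min_eq_right h, max_eq_left h] using hs
          · simpa [Set.uIoc_of_ge h, min_eq_left h, max_eq_right h] using hs)
        calc ‖A s (∑ n ∈ Finset.range N, iter n s)‖
            ≤ ‖A s‖ * ‖∑ n ∈ Finset.range N, iter n s‖ := (A s).le_opNorm _
          _ ≤ M * (∑' n, u n) := by
              apply mul_le_mul (hM s hs') ?_ (norm_nonneg _) hM0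
              calc ‖∑ n ∈ Finset.range N, iter n s‖ ≤ ∑ n ∈ Finset.range N, ‖iter n s‖ :=
                    norm_sum_le _ _
                _ ≤ ∑ n ∈ Finset.range N, u n := by
                    apply Finset.sum_le_sum; intro n _; exact hbound n s hs'
                _ ≤ ∑' n, u n := Summable.sum_le_tsum _ (fun n _ => by
                    apply div_nonneg (mul_nonneg (norm_nonneg _) (pow_nonneg
                      (mul_nonneg hM0 (abs_nonneg _)) _)) (Nat.cast_nonneg _)) hus
      · exact intervalIntegrable_const
      · filter_upwards with s hs
        exact ((A s).continuous.tendsto _).comp (hsummable s).hasSum.tendsto_sum_nat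
    have := hlim2
    rw [show (fun N => ∫ s in t₀..t, A s (∑ n ∈ Finset.range N, iter n s))
        = fun N => ∑ n ∈ Finset.range N, iter (n+1) t from funext hps] at this
    have huniq := tendsto_nhds_unique this hlim1
    rw [huniq]
    abel
  -- conclusion
  refine ⟨x, ?_, hxcont, ?_⟩
  · rw [hinteq t₀]; simp
  · intro t
    have hgcont : Continuous fun s => A s (x s) := hA.clm_apply hxcont
    have hprim : HasDerivAt (fun u => ∫ s in t₀..u, A s (x s)) (A t (x t)) t :=
      intervalIntegral.integral_hasDerivAt_right (hgcont.intervalIntegrable t₀ t)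
        (hgcont.stronglyMeasurableAtFilter volume (nhds t)) hgcont.continuousAt
    exact (hprim.const_add x₀).congr_of_eventuallyEq
      (Filter.Eventually.of_forall fun s => hinteq s)

set_option maxHeartbeats 1600000 in
theorem riccati_nonpositive_r_existence_comparison
    (t₀ : ℝ) (p q r : ℝ → ℝ) (α₀ : ℝ)
    (hp : ContinuousOn p (Set.Ici t₀)) (hq : ContinuousOn q (Set.Ici t₀))
    (hr : ContinuousOn r (Set.Ici t₀))
    (hppos : ∀ t ∈ Set.Ici t₀, 0 < p t)
    (hrneg : ∀ t ∈ Set.Ici t₀, r t ≤ 0)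
    (hα₀ : 0 ≤ α₀) :
    ∃ α : ℝ → ℝ, α t₀ = α₀ ∧
      (∀ t ∈ Set.Ici t₀,
        HasDerivAt α (-(α t ^ 2 / p t + q t * α t / p t + r t)) t) ∧
      (∀ t ∈ Set.Ici t₀, 0 ≤ α t) ∧
      ∀ t ∈ Set.Ici t₀,
        α₀ * Real.exp (-∫ s in t₀..t, q s / p s) /
          (1 + α₀ * ∫ τ in t₀..t,
            Real.exp (-∫ s in t₀..τ, q s / p s) / p τ) ≤ α t := by
  -- extend the coefficients to all of ℝ
  have hmax : ∀ t : ℝ, max t t₀ ∈ Ici t₀ := fun t => le_max_right t t₀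
  set P : ℝ → ℝ := fun t => p (max t t₀) with hP
  set Qf : ℝ → ℝ := fun t => q (max t t₀) with hQf
  set R : ℝ → ℝ := fun t => r (max t t₀) with hR
  have hPc : Continuous P := hp.comp_continuous (continuous_id.max continuous_const) hmax
  have hQc : Continuous Qf := hq.comp_continuous (continuous_id.max continuous_const) hmax
  have hRc : Continuous R := hr.comp_continuous (continuous_id.max continuous_const) hmax
  have hPpos : ∀ t, 0 < P t := fun t => hppos _ (hmax t)
  have hPne : ∀ t, P t ≠ 0 := fun t => (hPpos t).ne'
  have hRneg : ∀ t, R t ≤ 0 := fun t => hrneg _ (hmax t)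
  have hPeq : ∀ t ∈ Ici t₀, P t = p t := fun t ht => by rw [hP]; simp [max_eq_left (mem_Ici.mp ht)]
  have hQeq : ∀ t ∈ Ici t₀, Qf t = q t := fun t ht => by rw [hQf]; simp [max_eq_left (mem_Ici.mp ht)]
  have hReq : ∀ t ∈ Ici t₀, R t = r t := fun t ht => by rw [hR]; simp [max_eq_left (mem_Ici.mp ht)]
  -- the linear system
  set L12 : ℝ × ℝ →L[ℝ] ℝ × ℝ :=
    (ContinuousLinearMap.inl ℝ ℝ ℝ).comp (ContinuousLinearMap.snd ℝ ℝ ℝ) with hL12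
  set L22 : ℝ × ℝ →L[ℝ] ℝ × ℝ :=
    (ContinuousLinearMap.inr ℝ ℝ ℝ).comp (ContinuousLinearMap.snd ℝ ℝ ℝ) with hL22
  set L21 : ℝ × ℝ →L[ℝ] ℝ × ℝ :=
    (ContinuousLinearMap.inr ℝ ℝ ℝ).comp (ContinuousLinearMap.fst ℝ ℝ ℝ) with hL21
  set A : ℝ → ℝ × ℝ →L[ℝ] ℝ × ℝ := fun t =>
    (1 / P t) • L12 + (-(Qf t / P t)) • L22 + (-(R t)) • L21 with hA
  have hAc : Continuous A := by
    apply Continuous.add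
    apply Continuous.add
    · exact ((continuous_const.div hPc hPne).smul continuous_const)
    · exact (((hQc.div hPc hPne).neg).smul continuous_const)
    · exact ((hRc.neg).smul continuous_const)
  have hAapp : ∀ t (v : ℝ × ℝ), A t v = (v.2 / P t, -(Qf t / P t) * v.2 + (-(R t)) * v.1) := by
    intro t v
    refine Prod.ext ?_ ?_ <;>
      · simp [hA, hL12, hL22, hL21, smul_eq_mul, div_eq_mul_inv]
        try ring
  obtain ⟨x, hx0, hxc, hxd⟩ := linear_ode_global_existence A hAc t₀ (1, α₀)
  set u : ℝ → ℝ := fun t => (x t).1 with hu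
  set w : ℝ → ℝ := fun t => (x t).2 with hw
  have hu0 : u t₀ = 1 := by rw [hu]; simp [hx0]
  have hw0 : w t₀ = α₀ := by rw [hw]; simp [hx0]
  have huc : Continuous u := (continuous_fst.comp hxc)
  have hwc : Continuous w := (continuous_snd.comp hxc)
  have hud : ∀ t, HasDerivAt u (w t / P t) t := by
    intro t
    have := (ContinuousLinearMap.fst ℝ ℝ ℝ).hasFDerivAt.comp_hasDerivAt t (hxd t)
    simpa [hAapp, Function.comp_def] using this
  have hwd : ∀ t, HasDerivAt w (-(Qf t / P t) * w t + (-(R t)) * u t) t := by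
    intro t
    have := (ContinuousLinearMap.snd ℝ ℝ ℝ).hasFDerivAt.comp_hasDerivAt t (hxd t)
    simpa [hAapp, Function.comp_def] using this
  -- the primitive of q/p
  set Q : ℝ → ℝ := fun t => ∫ s in t₀..t, Qf s / P s with hQdef
  have hQPc : Continuous fun s => Qf s / P s := hQc.div hPc hPne
  have hQd : ∀ t, HasDerivAt Q (Qf t / P t) t := fun t =>
    intervalIntegral.integral_hasDerivAt_right (hQPc.intervalIntegrable _ _)
      (hQPc.stronglyMeasurableAtFilter volume (nhds t)) hQPc.continuousAt
  have hQcont : Continuous Q :=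
    intervalIntegral.continuous_primitive (fun a b => hQPc.intervalIntegrable a b) t₀
  have hQ0 : Q t₀ = 0 := by simp [hQdef]
  -- Step 1 : u > 1/2 on [t₀, ∞)
  have hupos : ∀ t ∈ Ici t₀, 1/2 < u t := by
    by_contra hcon
    push_neg at hcon
    obtain ⟨T₀, hT₀, hT₀le⟩ := hcon
    set B : Set ℝ := Ici t₀ ∩ u ⁻¹' (Iic (1/2)) with hB
    have hBne : B.Nonempty := ⟨T₀, hT₀, hT₀le⟩
    have hBclosed : IsClosed B := isClosed_Ici.inter (isClosed_Iic.preimage huc)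
    have hBbdd : BddBelow B := ⟨t₀, fun s hs => hs.1⟩
    set T : ℝ := sInf B with hT
    have hTB : T ∈ B := hBclosed.csInf_mem hBne hBbdd
    have hTge : t₀ ≤ T := hTB.1
    have hTne : T ≠ t₀ := by
      intro h
      have := hTB.2
      rw [h] at this
      simp only [mem_preimage, mem_Iic, hu0] at this
      linarith
    have hTgt : t₀ < T := lt_of_le_of_ne hTge (Ne.symm hTne)
    have hlt : ∀ s ∈ Ico t₀ T, 1/2 < u s := by
      intro s hs
      by_contra hsle
      push_neg at hsle
      have : s ∈ B := ⟨hs.1, hsle⟩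
      exact absurd (csInf_le hBbdd this) (not_le.mpr hs.2)
    -- F = w * exp Q is monotone on [t₀, T]
    set F : ℝ → ℝ := fun t => w t * Real.exp (Q t) with hF
    have hFd : ∀ t, HasDerivAt F ((-(R t)) * u t * Real.exp (Q t)) t := by
      intro t
      have h1 := (hwd t).mul ((hQd t).exp)
      refine h1.congr_deriv ?_
      field_simp
      ring
    have hFmono : MonotoneOn F (Icc t₀ T) := by
      apply monotoneOn_of_deriv_nonneg (convex_Icc _ _)
        (Continuous.continuousOn (by fun_prop))
        (fun s hs => ((hFd s).differentiableAt.differentiableWithinAt))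
      intro s hs
      rw [interior_Icc] at hs
      rw [(hFd s).deriv]
      have hus : 0 < u s := by
        have := hlt s ⟨hs.1.le, hs.2⟩
        linarith
      exact mul_nonneg (mul_nonneg (neg_nonneg.mpr (hRneg s)) hus.le) (Real.exp_pos _).le
    have hwpos : ∀ s ∈ Icc t₀ T, 0 ≤ w s := by
      intro s hs
      have h1 : F t₀ ≤ F s := hFmono ⟨le_refl _, hTge⟩ hs hs.1
      simp only [hF] at h1
      rw [hw0, hQ0, Real.exp_zero, mul_one] at h1
      nlinarith [Real.exp_pos (Q s), hα₀]
    have humono : MonotoneOn u (Icc t₀ T) := by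
      apply monotoneOn_of_deriv_nonneg (convex_Icc _ _) huc.continuousOn
        (fun s hs => ((hud s).differentiableAt.differentiableWithinAt))
      intro s hs
      rw [interior_Icc] at hs
      rw [(hud s).deriv]
      exact div_nonneg (hwpos s ⟨hs.1.le, hs.2.le⟩) (hPpos s).le
    have : (1:ℝ) ≤ u T := by
      have := humono ⟨le_refl _, hTge⟩ ⟨hTge, le_refl _⟩ hTge
      rwa [hu0] at this
    have : u T ≤ 1/2 := hTB.2
    linarith
  -- explicit comparison solution
  set w₁ : ℝ → ℝ := fun t => α₀ * Real.exp (-Q t) with hw₁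
  set u₁ : ℝ → ℝ := fun t => 1 + α₀ * ∫ τ in t₀..t, Real.exp (-Q τ) / P τ with hu₁
  have hIc : Continuous fun τ => Real.exp (-Q τ) / P τ :=
    (Real.continuous_exp.comp hQcont.neg).div hPc hPne
  have hw₁d : ∀ t, HasDerivAt w₁ (-(Qf t / P t) * w₁ t) t := by
    intro t
    have h1 := (((hQd t).neg).exp).const_mul α₀
    refine h1.congr_deriv ?_
    simp only [hw₁]
    simp only [Pi.neg_apply]
    ring
  have hu₁d : ∀ t, HasDerivAt u₁ (w₁ t / P t) t := by
    intro t
    have h1 : HasDerivAt (fun t => ∫ τ in t₀..t, Real.exp (-Q τ) / P τ)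
        (Real.exp (-Q t) / P t) t :=
      intervalIntegral.integral_hasDerivAt_right (hIc.intervalIntegrable _ _)
        (hIc.stronglyMeasurableAtFilter volume (nhds t)) hIc.continuousAt
    have h2 := (h1.const_mul α₀).const_add 1
    refine h2.congr_deriv ?_
    simp only [hw₁]
    ring
  have hu₁c : Continuous u₁ := by
    apply Continuous.add continuous_const
    exact continuous_const.mul (intervalIntegral.continuous_primitive
      (fun a b => hIc.intervalIntegrable a b) t₀)
  have hu₁pos : ∀ t ∈ Ici t₀, 0 < u₁ t := by
    intro t ht
    have : 0 ≤ ∫ τ in t₀..t, Real.exp (-Q τ) / P τ :=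
      intervalIntegral.integral_nonneg ht
        (fun s _ => div_nonneg (Real.exp_pos _).le (hPpos s).le)
    rw [hu₁]
    nlinarith [mul_nonneg hα₀ this]
  have hu₁0 : u₁ t₀ = 1 := by simp [hu₁]
  have hw₁0 : w₁ t₀ = α₀ := by simp [hw₁, hQ0]
  -- comparison function G ≥ 0
  set G : ℝ → ℝ := fun t => (w t * u₁ t - w₁ t * u t) * Real.exp (Q t) with hG
  have hGd : ∀ t, HasDerivAt G ((-(R t)) * (u t * u₁ t) * Real.exp (Q t)) t := by
    intro t
    have h1 := ((((hwd t).mul (hu₁d t)).sub ((hw₁d t).mul (hud t))).mul ((hQd t).exp))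
    refine h1.congr_deriv ?_
    field_simp
    simp only [Pi.sub_apply, Pi.mul_apply]
    ring
  have hGmono : MonotoneOn G (Ici t₀) := by
    apply monotoneOn_of_deriv_nonneg (convex_Ici _)
      (Continuous.continuousOn (by fun_prop))
      (fun s hs => ((hGd s).differentiableAt.differentiableWithinAt))
    intro s hs
    rw [interior_Ici] at hs
    rw [(hGd s).deriv]
    have h1 : 0 < u s := by have := hupos s (le_of_lt (mem_Ioi.mp hs)); linarith
    have h2 := hu₁pos s (le_of_lt (mem_Ioi.mp hs))
    exact mul_nonneg (mul_nonneg (neg_nonneg.mpr (hRneg s)) (mul_nonneg h1.le h2.le))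
      (Real.exp_pos _).le
  have hG0 : G t₀ = 0 := by
    simp only [hG]
    rw [hu0, hw0, hu₁0, hw₁0, hQ0]
    ring
  have hGnonneg : ∀ t ∈ Ici t₀, w₁ t * u t ≤ w t * u₁ t := by
    intro t ht
    have h1 : G t₀ ≤ G t := hGmono (self_mem_Ici) ht ht
    rw [hG0] at h1
    simp only [hG] at h1
    have h2 : 0 ≤ w t * u₁ t - w₁ t * u t :=
      (mul_nonneg_iff_of_pos_right (Real.exp_pos (Q t))).mp h1
    linarith
  -- conclusion
  refine ⟨fun t => w t / u t, ?_, ?_, ?_, ?_⟩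
  · simp [hu0, hw0]
  · intro t ht
    have hut : u t ≠ 0 := by have := hupos t ht; positivity
    have hd := (hwd t).div (hud t) hut
    refine hd.congr_deriv ?_
    rw [hPeq t ht, hQeq t ht, hReq t ht] at *
    have hpt := (hppos t ht).ne'
    field_simp
    ring
  · intro t ht
    have h1 := hGnonneg t ht
    have h2 : 0 < u t := by have := hupos t ht; linarith
    have h3 : 0 ≤ w₁ t := mul_nonneg hα₀ (Real.exp_pos _).le
    have h4 := hu₁pos t ht
    rw [le_div_iff₀ h2]
    nlinarith
  · intro t ht
    have hIcc : uIcc t₀ t = Icc t₀ t := uIcc_of_le ht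
    have hQmatch : ∀ τ ∈ Ici t₀, (∫ s in t₀..τ, q s / p s) = Q τ := by
      intro τ hτ
      rw [hQdef]
      apply intervalIntegral.integral_congr
      intro s hs
      rw [uIcc_of_le hτ] at hs
      show q s / p s = Qf s / P s
      rw [hQeq s hs.1, hPeq s hs.1]
    have hImatch : (∫ τ in t₀..t, Real.exp (-∫ s in t₀..τ, q s / p s) / p τ)
        = ∫ τ in t₀..t, Real.exp (-Q τ) / P τ := by
      apply intervalIntegral.integral_congr
      intro τ hτ
      rw [hIcc] at hτ
      show Real.exp (-∫ s in t₀..τ, q s / p s) / p τ = Real.exp (-Q τ) / P τ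
      rw [hQmatch τ hτ.1, hPeq τ hτ.1]
    rw [hQmatch t ht, hImatch]
    have h2 : 0 < u t := by have := hupos t ht; linarith
    have h4 := hu₁pos t ht
    rw [div_le_div_iff₀ h4 h2]
    have h5 := hGnonneg t ht
    simp only [hw₁, hu₁] at h5
    simp only [hu₁]
    linarith
end

section
/- Let p, q be continuous on [t₀,∞) with p > 0, and let α, αN be continuous functions on [t₀,∞) with ∫_{t₀}^∞ exp(-∫_{t₀}^τ (2αN(s)+q(s))/p(s) ds)/p(τ) dτ =: ν < ∞. Define α*(t) = αN(t) - 1/ν(t) where ν(t) = ∫_t^∞ exp(-∫_t^τ (2αN(s)+q(s))/p(s) ds)/p(τ) dτ. Then ∫_t^∞ exp(-∫_t^τ (2α*(s)+q(s))/p(s) ds)/p(τ) dτ = +∞ for every t ≥ t₀, i.e., ν_{α*}(t) = +∞. -/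
open MeasureTheory Set Filter

private lemma contOn_Ici_of_Icc {F : ℝ → ℝ} {t : ℝ}
    (h : ∀ T, t ≤ T → ContinuousOn F (Icc t T)) : ContinuousOn F (Ici t) := by
  intro x hx
  have hx1 : x ≤ x + 1 := by linarith
  have h1 : ContinuousWithinAt F (Icc t (x + 1)) x :=
    h (x + 1) (le_trans hx hx1) x ⟨hx, hx1⟩
  apply h1.mono_of_mem_nhdsWithin
  have hIic : Iic (x + 1) ∈ nhdsWithin x (Ici t) :=
    nhdsWithin_le_nhds (Iic_mem_nhds (by linarith))
  filter_upwards [hIic, self_mem_nhdsWithin] with y h1 h2 using ⟨h2, h1⟩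

theorem extremal_solution_tail_divergence
    (t₀ : ℝ) (p q αN : ℝ → ℝ)
    (hp : ContinuousOn p (Set.Ici t₀)) (hq : ContinuousOn q (Set.Ici t₀))
    (hppos : ∀ t ∈ Set.Ici t₀, 0 < p t)
    (hαN : ContinuousOn αN (Set.Ici t₀))
    (hν : MeasureTheory.IntegrableOn
      (fun τ => Real.exp (-∫ s in t₀..τ, (2 * αN s + q s) / p s) / p τ)
      (Set.Ici t₀)) :
    let ν : ℝ → ℝ := fun t =>
      ∫ τ in Set.Ici t,
        Real.exp (-∫ s in t..τ, (2 * αN s + q s) / p s) / p τ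
    let αstar : ℝ → ℝ := fun t => αN t - 1 / ν t
    ∀ t ∈ Set.Ici t₀,
      ¬ MeasureTheory.IntegrableOn
        (fun τ => Real.exp (-∫ s in t..τ, (2 * αstar s + q s) / p s) / p τ)
        (Set.Ici t) := by
  intro ν αstar t ht hInt
  -- basic notation
  set g : ℝ → ℝ := fun s => (2 * αN s + q s) / p s with hgdef
  have hgc : ContinuousOn g (Ici t₀) :=
    ((continuousOn_const.mul hαN).add hq).div hp (fun x hx => (hppos x hx).ne')
  have hsubIci : ∀ {a : ℝ}, t ≤ a → Ici a ⊆ Ici t₀ :=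
    fun {a} ha => Ici_subset_Ici.2 (le_trans ht ha)
  have huIcc : ∀ {a b : ℝ}, t₀ ≤ a → t₀ ≤ b → uIcc a b ⊆ Ici t₀ := by
    intro a b ha hb x hx
    exact le_trans (le_min ha hb) hx.1
  have hgint : ∀ a b, t₀ ≤ a → t₀ ≤ b → IntervalIntegrable g volume a b :=
    fun a b ha hb => (hgc.mono (huIcc ha hb)).intervalIntegrable
  set F : ℝ → ℝ := fun τ => ∫ s in t..τ, g s with hFdef
  set f : ℝ → ℝ := fun τ => Real.exp (-F τ) / p τ with hfdef
  -- continuity of F and f on Ici t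
  have hFc : ContinuousOn F (Ici t) := by
    apply contOn_Ici_of_Icc
    intro T hT
    have hInt : IntegrableOn g (uIcc t T) volume :=
      (hgc.mono (huIcc ht (le_trans ht hT))).integrableOn_compact isCompact_uIcc
    have := intervalIntegral.continuousOn_primitive_interval hInt
    rwa [uIcc_of_le hT] at this
  have hfc : ContinuousOn f (Ici t) := by
    apply ((Real.continuous_exp.comp_continuousOn hFc.neg).div
      (hp.mono (hsubIci le_rfl)))
    exact fun x hx => (hppos x (hsubIci le_rfl hx)).ne'
  have hfnonneg : ∀ τ ∈ Ici t, 0 ≤ f τ :=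
    fun τ hτ => div_nonneg (Real.exp_pos _).le (hppos τ (hsubIci le_rfl hτ)).le
  have hfpos : ∀ τ ∈ Ici t, 0 < f τ :=
    fun τ hτ => div_pos (Real.exp_pos _) (hppos τ (hsubIci le_rfl hτ))
  -- f is integrable on Ici t
  have hfint : IntegrableOn f (Ici t) := by
    have h0 : IntegrableOn
        (fun τ => Real.exp (-∫ s in t₀..τ, (2 * αN s + q s) / p s) / p τ)
        (Ici t) := hν.mono_set (hsubIci le_rfl)
    have h1 : IntegrableOn
        (fun τ => Real.exp (∫ s in t₀..t, g s) *
          (Real.exp (-∫ s in t₀..τ, (2 * αN s + q s) / p s) / p τ)) (Ici t) :=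
      h0.const_mul (Real.exp (∫ s in t₀..t, g s))
    apply h1.congr_fun _ measurableSet_Ici
    intro τ hτ
    have hadd : (∫ s in t₀..t, g s) + ∫ s in t..τ, g s = ∫ s in t₀..τ, g s :=
      intervalIntegral.integral_add_adjacent_intervals (hgint t₀ t le_rfl ht)
        (hgint t τ ht (le_trans ht hτ))
    have : -F τ = (∫ s in t₀..t, g s) + -∫ s in t₀..τ, g s := by
      simp only [hFdef]; linarith
    simp only [hfdef, this, Real.exp_add, mul_div_assoc, hgdef]
  -- the tail function R
  set R : ℝ → ℝ := fun τ => ∫ x in Ici τ, f x with hRdef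
  have hfintIci : ∀ {a : ℝ}, t ≤ a → IntegrableOn f (Ici a) :=
    fun {a} ha => hfint.mono_set (Ici_subset_Ici.2 ha)
  have Rsplit : ∀ a b, t ≤ a → a ≤ b → R a = (∫ x in a..b, f x) + R b := by
    intro a b hta hab
    have hu : Ico a b ∪ Ici b = Ici a := Ico_union_Ici_eq_Ici hab
    have hdisj : Disjoint (Ico a b) (Ici b) :=
      (Iio_disjoint_Ici le_rfl).mono_left Ico_subset_Iio_self
    have h1 : R a = (∫ x in Ico a b, f x) + ∫ x in Ici b, f x := by
      rw [hRdef]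
      simp only
      rw [← hu, setIntegral_union hdisj measurableSet_Ici
        ((hfintIci hta).mono_set (by rw [← hu]; exact subset_union_left))
        ((hfintIci hta).mono_set (by rw [← hu]; exact subset_union_right))]
    rw [h1, intervalIntegral.integral_of_le hab, integral_Ioc_eq_integral_Ioo,
      integral_Ico_eq_integral_Ioo]
  have Rnonneg : ∀ τ, t ≤ τ → 0 ≤ R τ := by
    intro τ hτ
    exact setIntegral_nonneg measurableSet_Ici
      (fun x hx => hfnonneg x (le_trans hτ hx))
  have Rpos : ∀ τ, t ≤ τ → 0 < R τ := by
    intro τ hτ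
    have hsub : uIcc τ (τ + 1) ⊆ Ici t := by
      rw [uIcc_of_le (by linarith)]
      exact fun x hx => le_trans hτ hx.1
    have h1 : 0 < ∫ x in τ..(τ + 1), f x :=
      intervalIntegral.intervalIntegral_pos_of_pos_on
        ((hfc.mono hsub).intervalIntegrable)
        (fun x hx => hfpos x (le_trans hτ hx.1.le)) (lt_add_one τ)
    have h2 := Rnonneg (τ + 1) (by linarith)
    rw [Rsplit τ (τ + 1) hτ (by linarith)]
    linarith
  -- continuity of R on Ici t
  have hRc : ContinuousOn R (Ici t) := by
    have hprim : ContinuousOn (fun τ => R t - ∫ x in t..τ, f x) (Ici t) := by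
      apply ContinuousOn.sub continuousOn_const
      apply contOn_Ici_of_Icc
      intro T hT
      have hI : IntegrableOn f (uIcc t T) volume := by
        rw [uIcc_of_le hT]
        exact hfint.mono_set (fun x hx => hx.1)
      have := intervalIntegral.continuousOn_primitive_interval hI
      rwa [uIcc_of_le hT] at this
    apply hprim.congr
    intro a ha
    rw [Rsplit t a le_rfl ha]; ring
  -- derivative of R
  have hRderiv : ∀ σ, t < σ → HasDerivAt R (-(f σ)) σ := by
    intro σ hσ
    have hmem : Ici t ∈ nhds σ := Ici_mem_nhds hσ
    have h1 : HasDerivAt (fun u => ∫ x in t..u, f x) (f σ) σ := by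
      apply intervalIntegral.integral_hasDerivAt_right
        ((hfc.mono (by rw [uIcc_of_le hσ.le]; exact fun x hx => hx.1)).intervalIntegrable)
        ⟨Ici t, hmem, hfc.aestronglyMeasurable measurableSet_Ici⟩
      exact hfc.continuousAt hmem
    have h2 : HasDerivAt (fun u => R t - ∫ x in t..u, f x) (-(f σ)) σ := by
      exact ((hasDerivAt_const σ (R t)).sub h1).congr_deriv (by simp)
    apply h2.congr_of_eventuallyEq
    filter_upwards [hmem] with u hu
    rw [Rsplit t u le_rfl hu]; ring
  -- R tends to 0 at infinity
  have Rtend : Tendsto R atTop (nhds 0) := by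
    have h1 : Tendsto (fun b => ∫ x in t..b, f x) atTop (nhds (∫ x in Ioi t, f x)) :=
      intervalIntegral_tendsto_integral_Ioi t (hfint.mono_set Ioi_subset_Ici_self)
        tendsto_id
    have h2 : Tendsto (fun b => R t - ∫ x in t..b, f x) atTop
        (nhds (R t - ∫ x in Ioi t, f x)) := tendsto_const_nhds.sub h1
    have h3 : R t - ∫ x in Ioi t, f x = 0 := by
      rw [hRdef]; simp only
      rw [integral_Ici_eq_integral_Ioi]; ring
    rw [h3] at h2
    apply h2.congr'
    filter_upwards [eventually_ge_atTop t] with b hb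
    rw [Rsplit t b le_rfl hb]; ring
  -- relation between ν and R
  have νR : ∀ σ, t ≤ σ → ν σ = Real.exp (F σ) * R σ := by
    intro σ hσ
    have heq : ∀ τ ∈ Ici σ,
        Real.exp (-∫ s in σ..τ, (2 * αN s + q s) / p s) / p τ
          = Real.exp (F σ) * f τ := by
      intro τ hτ
      have hadd : F σ + ∫ s in σ..τ, g s = F τ :=
        intervalIntegral.integral_add_adjacent_intervals
          (hgint t σ ht (le_trans ht hσ)) (hgint σ τ (le_trans ht hσ)
          (le_trans (le_trans ht hσ) hτ))
      have h2 : -∫ s in σ..τ, g s = F σ + -F τ := by linarith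
      show Real.exp (-∫ s in σ..τ, g s) / p τ = Real.exp (F σ) * f τ
      rw [h2, Real.exp_add, hfdef, mul_div_assoc]
    show (∫ τ in Ici σ,
      Real.exp (-∫ s in σ..τ, (2 * αN s + q s) / p s) / p τ) = Real.exp (F σ) * R σ
    rw [setIntegral_congr_fun measurableSet_Ici heq, integral_const_mul]
  -- key exponent identity
  have key : ∀ τ, t ≤ τ →
      (∫ s in t..τ, (2 * αstar s + q s) / p s)
        = F τ + 2 * Real.log (R τ) - 2 * Real.log (R t) := by
    intro τ hτ
    have hRcτ : ContinuousOn R (Icc t τ) := hRc.mono (fun x hx => hx.1)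
    have hfRc : ContinuousOn (fun s => f s / R s) (Icc t τ) :=
      (hfc.mono (fun x hx => hx.1)).div hRcτ (fun x hx => (Rpos x hx.1).ne')
    have hfRint : IntervalIntegrable (fun s => f s / R s) volume t τ :=
      (hfRc.mono (uIcc_of_le hτ).subset).intervalIntegrable
    have hcongr : EqOn (fun s => (2 * αstar s + q s) / p s)
        (fun s => g s - 2 * (f s / R s)) (uIcc t τ) := by
      intro s hs
      rw [uIcc_of_le hτ] at hs
      have hst : t ≤ s := hs.1
      have hps : p s ≠ 0 := (hppos s (hsubIci le_rfl hst)).ne'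
      have hRs : R s ≠ 0 := (Rpos s hst).ne'
      have hes : Real.exp (F s) ≠ 0 := (Real.exp_pos _).ne'
      show (2 * (αN s - 1 / ν s) + q s) / p s = g s - 2 * (f s / R s)
      rw [νR s hst, hgdef, hfdef]
      simp only
      rw [Real.exp_neg]
      field_simp
      ring
    rw [intervalIntegral.integral_congr hcongr]
    have h3 : (∫ s in t..τ, f s / R s) = -Real.log (R τ) - -Real.log (R t) := by
      apply intervalIntegral.integral_eq_sub_of_hasDeriv_right_of_le hτ
        ((hRcτ.log (fun x hx => (Rpos x hx.1).ne')).neg) _ hfRint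
      intro x hx
      have h' : HasDerivAt (fun σ => -Real.log (R σ)) (f x / R x) x := by
        have := ((hRderiv x hx.1).log (Rpos x hx.1.le).ne').neg
        exact this.congr_deriv (by simp [neg_div])
      exact h'.hasDerivWithinAt
    rw [intervalIntegral.integral_sub (hgint t τ ht (le_trans ht hτ))
      (hfRint.const_mul 2), intervalIntegral.integral_const_mul, h3]
    simp only [hFdef, hgdef]
    ring
  -- pointwise form of the new integrand
  have hI : ∀ τ, t ≤ τ →
      Real.exp (-∫ s in t..τ, (2 * αstar s + q s) / p s) / p τ
        = (R t) ^ 2 * (f τ / (R τ) ^ 2) := by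
    intro τ hτ
    rw [key τ hτ]
    have e1 : Real.exp (2 * Real.log (R τ)) = (R τ) ^ 2 := by
      rw [two_mul, Real.exp_add, Real.exp_log (Rpos τ hτ), sq]
    have e2 : Real.exp (2 * Real.log (R t)) = (R t) ^ 2 := by
      rw [two_mul, Real.exp_add, Real.exp_log (Rpos t le_rfl), sq]
    have hrw : -(F τ + 2 * Real.log (R τ) - 2 * Real.log (R t))
        = -F τ + (2 * Real.log (R t) - 2 * Real.log (R τ)) := by ring
    rw [hrw, Real.exp_add, Real.exp_sub, e1, e2, hfdef]
    simp only
    ring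
  -- the contradiction
  set Istar : ℝ → ℝ := fun τ =>
    Real.exp (-∫ s in t..τ, (2 * αstar s + q s) / p s) / p τ with hIdef
  have hIstar_nonneg : ∀ τ ∈ Ici t, 0 ≤ Istar τ :=
    fun τ hτ => div_nonneg (Real.exp_pos _).le (hppos τ (hsubIci le_rfl hτ)).le
  set C : ℝ := ∫ τ in Ici t, Istar τ with hCdef
  have hC0 : 0 ≤ C := setIntegral_nonneg measurableSet_Ici hIstar_nonneg
  have hRt := Rpos t le_rfl
  have hbound : ∀ T, t ≤ T → (R t) ^ 2 / R T - R t ≤ C := by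
    intro T hT
    have hcongr : EqOn Istar (fun τ => (R t) ^ 2 * (f τ / (R τ) ^ 2)) (uIcc t T) := by
      intro τ hτ
      rw [uIcc_of_le hT] at hτ
      exact hI τ hτ.1
    have hRcT : ContinuousOn R (Icc t T) := hRc.mono (fun x hx => hx.1)
    have hφc : ContinuousOn (fun τ => (R t) ^ 2 * (f τ / (R τ) ^ 2)) (Icc t T) :=
      continuousOn_const.mul ((hfc.mono (fun x hx => hx.1)).div
        (hRcT.pow 2) (fun x hx => pow_ne_zero 2 (Rpos x hx.1).ne'))
    have hφint : IntervalIntegrable (fun τ => (R t) ^ 2 * (f τ / (R τ) ^ 2))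
        volume t T :=
      (hφc.mono (uIcc_of_le hT).subset).intervalIntegrable
    have hFTC : (∫ τ in t..T, Istar τ) = (R t) ^ 2 / R T - (R t) ^ 2 / R t := by
      rw [intervalIntegral.integral_congr hcongr]
      have hcont : ContinuousOn (fun τ => (R t) ^ 2 / R τ) (Icc t T) :=
        continuousOn_const.div hRcT (fun x hx => (Rpos x hx.1).ne')
      apply intervalIntegral.integral_eq_sub_of_hasDeriv_right_of_le hT hcont _ hφint
      intro x hx
      have h1 : HasDerivAt (fun u => (R u)⁻¹) (-(-(f x)) / R x ^ 2) x :=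
        (hRderiv x hx.1).inv (Rpos x hx.1.le).ne'
      have h2 := h1.const_mul ((R t) ^ 2)
      have h3 : HasDerivAt (fun u => (R t) ^ 2 / R u) ((R t) ^ 2 * (f x / (R x) ^ 2)) x := by
        simp only [div_eq_mul_inv, neg_neg] at h2 ⊢
        exact h2
      exact h3.hasDerivWithinAt
    have hself : (R t) ^ 2 / R t = R t := by
      rw [sq, mul_div_assoc, div_self hRt.ne', mul_one]
    have hle : (∫ τ in t..T, Istar τ) ≤ C := by
      rw [intervalIntegral.integral_of_le hT, hCdef]
      apply setIntegral_mono_set hInt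
        ((ae_restrict_iff' measurableSet_Ici).2 (ae_of_all _ hIstar_nonneg))
      exact HasSubset.Subset.eventuallyLE (fun x hx => hx.1.le)
    rw [hFTC, hself] at hle
    exact hle
  have hε : ∀ T, t ≤ T → (R t) ^ 2 / (C + R t) ≤ R T := by
    intro T hT
    have hRT := Rpos T hT
    have h2 : (R t) ^ 2 / R T ≤ C + R t := by linarith [hbound T hT]
    have h3 : (R t) ^ 2 ≤ (C + R t) * R T := (div_le_iff₀ hRT).1 h2
    rw [div_le_iff₀ (by positivity)]
    nlinarith
  have hle0 : (R t) ^ 2 / (C + R t) ≤ 0 :=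
    ge_of_tendsto Rtend ((eventually_ge_atTop t).mono hε)
  have hgt0 : 0 < (R t) ^ 2 / (C + R t) := by positivity
  linarith
end
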